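/- arXiv:1409.5900 — 12 statements merged into one kernel-verified Lean document; each statement's English description precedes it below -/
import Mathlib

section
/- Let f : 2^N → ℝ be submodular with multilinear extension F. For every three vectors z ≤ y ≤ x in [0,1]^N (coordinate-wise), F(x) − F(y) ≤ F(x − z) − F(y − z). -/
open Finset

/-- The multilinear extension `F(x) = E[f(R(x))]` of a set function `f`. -/
noncomputable def multilinearExt {N : Type*} [Fintype N] [DecidableEq N]
    (f : Finset N → ℝ) (x : N → ℝ) : ℝ :=
  ∑ S : Finset N, (∏ u ∈ S, x u) * (∏ u ∈ Sᶜ, (1 - x u)) * f S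

section Aux
variable {N : Type*} [Fintype N] [DecidableEq N]

lemma mle_affine (f : Finset N → ℝ) (w : N → ℝ) (u : N) (t : ℝ) :
    multilinearExt f (Function.update w u t)
      = (1 - t) * multilinearExt f (Function.update w u 0)
        + t * multilinearExt f (Function.update w u 1) := by
  unfold multilinearExt
  rw [Finset.mul_sum, Finset.mul_sum, ← Finset.sum_add_distrib]
  refine Finset.sum_congr rfl fun S _ => ?_
  by_cases hu : u ∈ S
  · have h1 : ∀ s : ℝ, ∏ v ∈ S, Function.update w u s v
        = s * ∏ v ∈ S.erase u, w v := by
      intro s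
      rw [← Finset.mul_prod_erase S _ hu, Function.update_self]
      congr 1
      exact Finset.prod_congr rfl fun v hv =>
        Function.update_of_ne (Finset.ne_of_mem_erase hv) _ _
    have h2 : ∀ s : ℝ, ∏ v ∈ Sᶜ, (1 - Function.update w u s v)
        = ∏ v ∈ Sᶜ, (1 - w v) := fun s =>
      Finset.prod_congr rfl fun v hv => by
        rw [Function.update_of_ne (by rintro rfl; exact (Finset.mem_compl.mp hv) hu)]
    rw [h1, h1, h1, h2, h2, h2]; ring
  · have hu' : u ∈ Sᶜ := Finset.mem_compl.mpr hu
    have h1 : ∀ s : ℝ, ∏ v ∈ S, Function.update w u s v = ∏ v ∈ S, w v := fun s =>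
      Finset.prod_congr rfl fun v hv => by
        rw [Function.update_of_ne (by rintro rfl; exact hu hv)]
    have h2 : ∀ s : ℝ, ∏ v ∈ Sᶜ, (1 - Function.update w u s v)
        = (1 - s) * ∏ v ∈ Sᶜ.erase u, (1 - w v) := by
      intro s
      rw [← Finset.mul_prod_erase Sᶜ _ hu', Function.update_self]
      congr 1
      exact Finset.prod_congr rfl fun v hv => by
        rw [Function.update_of_ne (Finset.ne_of_mem_erase hv)]
    rw [h1, h1, h1, h2, h2, h2]; ring

lemma mle_pin_one (f : Finset N → ℝ) (w : N → ℝ) (u : N) :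
    multilinearExt f (Function.update w u 1)
      = multilinearExt (fun S => f (insert u S)) (Function.update w u 0) := by
  unfold multilinearExt
  have hL : ∀ S : Finset N, u ∉ S →
      (∏ v ∈ S, Function.update w u 1 v) * (∏ v ∈ Sᶜ, (1 - Function.update w u 1 v)) * f S
        = 0 := by
    intro S hu
    have : ∏ v ∈ Sᶜ, (1 - Function.update w u 1 v) = 0 :=
      Finset.prod_eq_zero (Finset.mem_compl.mpr hu) (by simp)
    rw [this, mul_zero, zero_mul]
  have hR : ∀ S : Finset N, u ∈ S →
      (∏ v ∈ S, Function.update w u 0 v) * (∏ v ∈ Sᶜ, (1 - Function.update w u 0 v))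
          * f (insert u S) = 0 := by
    intro S hu
    have : ∏ v ∈ S, Function.update w u 0 v = 0 :=
      Finset.prod_eq_zero hu (by simp)
    rw [this, zero_mul, zero_mul]
  have e1 : (∑ S : Finset N,
        (∏ v ∈ S, Function.update w u 1 v) * (∏ v ∈ Sᶜ, (1 - Function.update w u 1 v)) * f S)
      = ∑ S ∈ Finset.univ.filter (fun S => u ∈ S),
        (∏ v ∈ S, Function.update w u 1 v) * (∏ v ∈ Sᶜ, (1 - Function.update w u 1 v)) * f S :=
    (Finset.sum_filter_of_ne (fun S _ h => by by_contra hu; exact h (hL S hu))).symm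
  have e2 : (∑ S : Finset N,
        (∏ v ∈ S, Function.update w u 0 v) * (∏ v ∈ Sᶜ, (1 - Function.update w u 0 v))
          * f (insert u S))
      = ∑ S ∈ Finset.univ.filter (fun S => u ∉ S),
        (∏ v ∈ S, Function.update w u 0 v) * (∏ v ∈ Sᶜ, (1 - Function.update w u 0 v))
          * f (insert u S) :=
    (Finset.sum_filter_of_ne (fun S _ h => by by_contra hu; exact h (hR S hu))).symm
  rw [e1, e2]
  refine Finset.sum_nbij' (fun S => S.erase u) (fun S => insert u S) ?_ ?_ ?_ ?_ ?_
  · intro S hS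
    simp only [Finset.mem_filter, Finset.mem_univ, true_and] at hS ⊢
    exact Finset.notMem_erase u S
  · intro S hS
    simp only [Finset.mem_filter, Finset.mem_univ, true_and] at hS ⊢
    exact Finset.mem_insert_self u S
  · intro S hS
    simp only [Finset.mem_filter, Finset.mem_univ, true_and] at hS
    exact Finset.insert_erase hS
  · intro S hS
    simp only [Finset.mem_filter, Finset.mem_univ, true_and] at hS
    exact Finset.erase_insert hS
  · intro S hS
    simp only [Finset.mem_filter, Finset.mem_univ, true_and] at hS
    have hfs : insert u (S.erase u) = S := Finset.insert_erase hS
    have hp1 : ∏ v ∈ S, Function.update w u 1 v = ∏ v ∈ S.erase u, w v := by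
      rw [← Finset.mul_prod_erase S _ hS, Function.update_self, one_mul]
      exact Finset.prod_congr rfl fun v hv =>
        Function.update_of_ne (Finset.ne_of_mem_erase hv) _ _
    have hp2 : ∏ v ∈ S.erase u, Function.update w u 0 v = ∏ v ∈ S.erase u, w v :=
      Finset.prod_congr rfl fun v hv =>
        Function.update_of_ne (Finset.ne_of_mem_erase hv) _ _
    have hcompl : (S.erase u)ᶜ = insert u Sᶜ := by
      ext a
      simp only [Finset.mem_compl, Finset.mem_erase, Finset.mem_insert]
      by_cases ha : a = u
      · simp [ha, hS]
      · simp [ha]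
    have hq2 : ∏ v ∈ (S.erase u)ᶜ, (1 - Function.update w u 0 v)
        = ∏ v ∈ Sᶜ, (1 - w v) := by
      rw [hcompl, Finset.prod_insert (by simpa using hS)]
      rw [Function.update_self, sub_zero, one_mul]
      exact Finset.prod_congr rfl fun v hv => by
        rw [Function.update_of_ne (by rintro rfl; exact (Finset.mem_compl.mp hv) hS)]
    have hq1 : ∏ v ∈ Sᶜ, (1 - Function.update w u 1 v) = ∏ v ∈ Sᶜ, (1 - w v) :=
      Finset.prod_congr rfl fun v hv => by
        rw [Function.update_of_ne (by rintro rfl; exact (Finset.mem_compl.mp hv) hS)]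
    rw [hp1, hp2, hq1, hq2, hfs]

/-- The marginal value of coordinate `u`. -/
noncomputable def mleMarg (f : Finset N → ℝ) (u : N) (w : N → ℝ) : ℝ :=
  multilinearExt f (Function.update w u 1) - multilinearExt f (Function.update w u 0)

lemma mle_sub (f : Finset N → ℝ) (w : N → ℝ) (u : N) (s t : ℝ) :
    multilinearExt f (Function.update w u s) - multilinearExt f (Function.update w u t)
      = (s - t) * mleMarg f u w := by
  rw [mle_affine f w u s, mle_affine f w u t, mleMarg]; ring

lemma mle_sub' (f : Finset N → ℝ) (w : N → ℝ) (u : N) (t : ℝ) :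
    multilinearExt f w - multilinearExt f (Function.update w u t)
      = (w u - t) * mleMarg f u w := by
  have h := mle_sub f w u (w u) t
  rwa [Function.update_eq_self] at h

lemma marg_update_eq (f : Finset N → ℝ) (u : N) (w : N → ℝ) (s : ℝ) :
    mleMarg f u (Function.update w u s) = mleMarg f u w := by
  unfold mleMarg
  rw [Function.update_idem, Function.update_idem]

lemma marg_affine (f : Finset N → ℝ) (u v : N) (huv : u ≠ v) (w : N → ℝ) (t : ℝ) :
    mleMarg f u (Function.update w v t)
      = (1 - t) * mleMarg f u (Function.update w v 0)
        + t * mleMarg f u (Function.update w v 1) := by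
  unfold mleMarg
  rw [Function.update_comm huv.symm t (1:ℝ) w, Function.update_comm huv.symm t (0:ℝ) w,
    mle_affine f _ v t, mle_affine f _ v t,
    Function.update_comm huv.symm (0:ℝ) (1:ℝ) w, Function.update_comm huv.symm (1:ℝ) (1:ℝ) w,
    Function.update_comm huv.symm (0:ℝ) (0:ℝ) w, Function.update_comm huv.symm (1:ℝ) (0:ℝ) w]
  ring

omit [Fintype N] in
lemma bounds_update {w : N → ℝ} (hw0 : ∀ a, 0 ≤ w a) (hw1 : ∀ a, w a ≤ 1)
    (u : N) (s : ℝ) (hs0 : 0 ≤ s) (hs1 : s ≤ 1) :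
    (∀ a, 0 ≤ Function.update w u s a) ∧ (∀ a, Function.update w u s a ≤ 1) := by
  constructor <;> intro a <;> by_cases ha : a = u
  · subst ha; rw [Function.update_self]; exact hs0
  · rw [Function.update_of_ne ha]; exact hw0 a
  · subst ha; rw [Function.update_self]; exact hs1
  · rw [Function.update_of_ne ha]; exact hw1 a

lemma second_diff (f : Finset N → ℝ)
    (hf : ∀ A B : Finset N, f A + f B ≥ f (A ∪ B) + f (A ∩ B))
    (u v : N) (huv : u ≠ v) (w : N → ℝ)
    (hw0 : ∀ a, 0 ≤ w a) (hw1 : ∀ a, w a ≤ 1) :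
    mleMarg f u (Function.update w v 1) ≤ mleMarg f u (Function.update w v 0) := by
  unfold mleMarg
  rw [Function.update_comm huv.symm (1:ℝ) (1:ℝ) w, Function.update_comm huv.symm (1:ℝ) (0:ℝ) w,
    Function.update_comm huv.symm (0:ℝ) (1:ℝ) w, Function.update_comm huv.symm (0:ℝ) (0:ℝ) w]
  -- now everything is update (update w u _) v _
  rw [mle_pin_one f (Function.update w u 1) v, mle_pin_one f (Function.update w u 0) v,
    Function.update_comm (huv) (1:ℝ) (0:ℝ) w, Function.update_comm (huv) (0:ℝ) (0:ℝ) w,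
    mle_pin_one _ (Function.update w v 0) u,
    Function.update_comm (huv.symm) (0:ℝ) (0:ℝ) w,
    mle_pin_one f (Function.update w v 0) u,
    Function.update_comm (huv.symm) (0:ℝ) (0:ℝ) w]
  set w0 := Function.update (Function.update w u 0) v 0 with hw0def
  have hb0 : ∀ a, 0 ≤ w0 a := by
    have h1 := bounds_update hw0 hw1 u 0 le_rfl zero_le_one
    exact (bounds_update h1.1 h1.2 v 0 le_rfl zero_le_one).1
  have hb1 : ∀ a, w0 a ≤ 1 := by
    have h1 := bounds_update hw0 hw1 u 0 le_rfl zero_le_one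
    exact (bounds_update h1.1 h1.2 v 0 le_rfl zero_le_one).2
  unfold multilinearExt
  rw [← Finset.sum_sub_distrib, ← Finset.sum_sub_distrib]
  refine Finset.sum_le_sum fun S _ => ?_
  dsimp only
  have hp : 0 ≤ (∏ a ∈ S, w0 a) * ∏ a ∈ Sᶜ, (1 - w0 a) :=
    mul_nonneg (Finset.prod_nonneg fun a _ => hb0 a)
      (Finset.prod_nonneg fun a _ => by linarith [hb1 a])
  have hunion : insert u S ∪ insert v S = insert v (insert u S) := by
    ext a
    simp only [Finset.mem_union, Finset.mem_insert]
    tauto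
  have hinter : insert u S ∩ insert v S = S := by
    ext a
    simp only [Finset.mem_inter, Finset.mem_insert]
    constructor
    · rintro ⟨h1 | h1, h2 | h2⟩ <;> first | assumption | (subst h1; subst h2; exact absurd rfl huv)
    · intro h; exact ⟨Or.inr h, Or.inr h⟩
  have hsub := hf (insert u S) (insert v S)
  rw [hunion, hinter] at hsub
  nlinarith [hp, hsub]

/-- Marginals are antitone. -/
lemma marg_antitone (f : Finset N → ℝ)
    (hf : ∀ A B : Finset N, f A + f B ≥ f (A ∪ B) + f (A ∩ B))
    (u : N) (a b : N → ℝ)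
    (hb0 : ∀ v, 0 ≤ b v) (hba : ∀ v, b v ≤ a v) (ha1 : ∀ v, a v ≤ 1) :
    mleMarg f u a ≤ mleMarg f u b := by
  have key : ∀ S : Finset N,
      mleMarg f u (fun v => if v ∈ S then a v else b v) ≤ mleMarg f u b := by
    intro S
    induction S using Finset.induction_on with
    | empty => simp
    | @insert v S hvS ih =>
      have hc0 : ∀ w, 0 ≤ (fun w => if w ∈ S then a w else b w) w := by
        intro w; dsimp only; split
        · linarith [hb0 w, hba w]
        · exact hb0 w
      have hc1 : ∀ w, (fun w => if w ∈ S then a w else b w) w ≤ 1 := by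
        intro w; dsimp only; split
        · exact ha1 w
        · linarith [hba w, ha1 w]
      have hmix : (fun w => if w ∈ insert v S then a w else b w)
          = Function.update (fun w => if w ∈ S then a w else b w) v (a v) := by
        funext w
        by_cases hw : w = v
        · subst hw; simp [Function.update_self]
        · rw [Function.update_of_ne hw]
          simp [Finset.mem_insert, hw]
      have hmix2 : (fun w => if w ∈ S then a w else b w)
          = Function.update (fun w => if w ∈ S then a w else b w) v (b v) := by
        funext w
        by_cases hw : w = v
        · subst hw; simp [Function.update_self, hvS]
        · rw [Function.update_of_ne hw]
      rw [hmix]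
      refine le_trans ?_ ih
      by_cases huv : v = u
      · subst huv
        rw [marg_update_eq]
      · conv_rhs => rw [hmix2]
        set c := fun w => if w ∈ S then a w else b w with hc
        rw [marg_affine f u v (Ne.symm huv) c (a v), marg_affine f u v (Ne.symm huv) c (b v)]
        have hD := second_diff f hf u v (Ne.symm huv) c hc0 hc1
        have hab : b v ≤ a v := hba v
        nlinarith [hD, hab]
  have ha : (fun v => if v ∈ (Finset.univ : Finset N) then a v else b v) = a := by
    funext w; simp
  have := key Finset.univ
  rwa [ha] at this

lemma single_step (f : Finset N → ℝ)
    (hf : ∀ A B : Finset N, f A + f B ≥ f (A ∪ B) + f (A ∩ B))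
    (u : N) (t : ℝ) (ht : 0 ≤ t) (a b : N → ℝ)
    (hb0 : ∀ v, 0 ≤ b v) (hba : ∀ v, b v ≤ a v) (ha1 : ∀ v, a v ≤ 1) :
    multilinearExt f a - multilinearExt f b
      ≤ multilinearExt f (Function.update a u (a u - t))
        - multilinearExt f (Function.update b u (b u - t)) := by
  have h1 := mle_sub' f a u (a u - t)
  have h2 := mle_sub' f b u (b u - t)
  have h3 := marg_antitone f hf u a b hb0 hba ha1
  have h4 : t * mleMarg f u a ≤ t * mleMarg f u b :=
    mul_le_mul_of_nonneg_left h3 ht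
  have e1 : a u - (a u - t) = t := by ring
  have e2 : b u - (b u - t) = t := by ring
  rw [e1] at h1
  rw [e2] at h2
  linarith

end Aux

/-- for submodular `f` and `z ≤ y ≤ x` in `[0,1]^N`,
`F(x) − F(y) ≤ F(x − z) − F(y − z)`. -/
theorem multilinearExt_diff_mono {N : Type*} [Fintype N] [DecidableEq N]
    (f : Finset N → ℝ)
    (hf : ∀ A B : Finset N, f A + f B ≥ f (A ∪ B) + f (A ∩ B))
    (x y z : N → ℝ)
    (hz : ∀ u, 0 ≤ z u) (hzy : ∀ u, z u ≤ y u) (hyx : ∀ u, y u ≤ x u)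
    (hx1 : ∀ u, x u ≤ 1) :
    multilinearExt f x - multilinearExt f y ≤
      multilinearExt f (fun u => x u - z u) - multilinearExt f (fun u => y u - z u) := by
  have key : ∀ S : Finset N,
      multilinearExt f x - multilinearExt f y
        ≤ multilinearExt f (fun v => if v ∈ S then x v - z v else x v)
          - multilinearExt f (fun v => if v ∈ S then y v - z v else y v) := by
    intro S
    induction S using Finset.induction_on with
    | empty => simp
    | @insert v S hvS ih =>
      set xs := fun w => if w ∈ S then x w - z w else x w with hxs
      set ys := fun w => if w ∈ S then y w - z w else y w with hys
      have hb0 : ∀ w, 0 ≤ ys w := by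
        intro w; rw [hys]; dsimp only; split
        · linarith [hzy w]
        · linarith [hz w, hzy w]
      have hba : ∀ w, ys w ≤ xs w := by
        intro w; rw [hxs, hys]; dsimp only; split
        · linarith [hyx w]
        · linarith [hyx w]
      have ha1 : ∀ w, xs w ≤ 1 := by
        intro w; rw [hxs]; dsimp only; split
        · linarith [hx1 w, hz w]
        · exact hx1 w
      have hmx : (fun w => if w ∈ insert v S then x w - z w else x w)
          = Function.update xs v (xs v - z v) := by
        funext w
        by_cases hw : w = v
        · subst hw; rw [Function.update_self, hxs]; simp [hvS]
        · rw [Function.update_of_ne hw, hxs]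
          simp [Finset.mem_insert, hw]
      have hmy : (fun w => if w ∈ insert v S then y w - z w else y w)
          = Function.update ys v (ys v - z v) := by
        funext w
        by_cases hw : w = v
        · subst hw; rw [Function.update_self, hys]; simp [hvS]
        · rw [Function.update_of_ne hw, hys]
          simp [Finset.mem_insert, hw]
      rw [hmx, hmy]
      exact le_trans ih (single_step f hf v (z v) (hz v) xs ys hb0 hba ha1)
  have hxu : (fun v => if v ∈ (Finset.univ : Finset N) then x v - z v else x v)
      = fun v => x v - z v := by funext w; simp
  have hyu : (fun v => if v ∈ (Finset.univ : Finset N) then y v - z v else y v)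
      = fun v => y v - z v := by funext w; simp
  have := key Finset.univ
  rwa [hxu, hyu] at this
end

section
/- Let f : 2^N → ℝ≥0 be a non-negative symmetric submodular function with multilinear extension F, let S ⊆ N, and let x ∈ [0,1]^N be a vector such that F(y) ≤ F(x) for every y ∈ [0,1]^N with y ≤ x coordinate-wise. Then F(1_S ∨ x) ≥ f(S) − F(x). -/
open Finset

/-- for a non-negative symmetric submodular `f`, a set `S`, and a vector
`x ∈ [0,1]^N` such that `F(y) ≤ F(x)` for every `y ≤ x` in `[0,1]^N`, we have
`F(1_S ∨ x) ≥ f(S) − F(x)`. -/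
theorem union_bound_symmetric {N : Type*} [Fintype N] [DecidableEq N]
    (f : Finset N → ℝ)
    (hnonneg : ∀ S : Finset N, 0 ≤ f S)
    (hsym : ∀ S : Finset N, f S = f Sᶜ)
    (hsub : ∀ A B : Finset N, f A + f B ≥ f (A ∪ B) + f (A ∩ B))
    (S : Finset N) (x : N → ℝ) (hx : ∀ u, 0 ≤ x u ∧ x u ≤ 1)
    (hmax : ∀ y : N → ℝ, (∀ u, 0 ≤ y u ∧ y u ≤ x u) →
      multilinearExt f y ≤ multilinearExt f x) :
    multilinearExt f (fun u => max (if u ∈ S then (1 : ℝ) else 0) (x u)) ≥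
      f S - multilinearExt f x := by
  set z : N → ℝ := fun u => max (if u ∈ S then (1 : ℝ) else 0) (x u) with hzdef
  set y : N → ℝ := fun u => if u ∈ S then (0 : ℝ) else x u with hydef
  have hy01 : ∀ u, 0 ≤ y u ∧ y u ≤ x u := by
    intro u
    by_cases h : u ∈ S <;> simp [hydef, h, (hx u).1]
  have hzS : ∀ u ∈ S, z u = 1 := by
    intro u hu
    simp [hzdef, hu, max_eq_left (hx u).2]
  have hzNS : ∀ u, u ∉ S → z u = x u := by
    intro u hu
    simp [hzdef, hu, max_eq_right (hx u).1]
  set p : Finset N → ℝ := fun T => (∏ u ∈ T, y u) * (∏ u ∈ Tᶜ, (1 - y u)) with hpdef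
  have hpnonneg : ∀ T, 0 ≤ p T := by
    intro T
    apply mul_nonneg
    · exact Finset.prod_nonneg fun u _ => (hy01 u).1
    · exact Finset.prod_nonneg fun u _ => by linarith [(hy01 u).2, (hx u).2]
  -- weights sum to 1
  have hsum1 : ∑ T : Finset N, p T = 1 := by
    have h := Finset.prod_add y (fun u => 1 - y u) (univ : Finset N)
    have h2 : ∀ u ∈ (univ : Finset N), y u + (1 - y u) = 1 := fun u _ => by ring
    rw [Finset.prod_congr rfl h2, Finset.prod_const_one, Finset.powerset_univ] at h
    refine Eq.trans ?_ h.symm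
    refine Finset.sum_congr rfl fun T _ => ?_
    simp only [hpdef, Finset.compl_eq_univ_sdiff]
  have hinv : Function.Involutive (fun T : Finset N => symmDiff T S) :=
    fun T => symmDiff_symmDiff_cancel_right S T
  -- key identity: F(z) = ∑_T p T * f (S ∪ T)
  have key : multilinearExt f z = ∑ T : Finset N, p T * f (S ∪ T) := by
    unfold multilinearExt
    refine (Fintype.sum_equiv (Function.Involutive.toPerm _ hinv)
      (fun T => p T * f (S ∪ T))
      (fun A => (∏ u ∈ A, z u) * (∏ u ∈ Aᶜ, (1 - z u)) * f A) ?_).symm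
    intro T
    simp only [Function.Involutive.coe_toPerm]
    by_cases hd : Disjoint S T
    · have hTS : symmDiff T S = S ∪ T := by
        rw [(hd.symm).symmDiff_eq_sup]; exact sup_comm _ _
      rw [hTS]
      have hST : ∀ u ∈ T, u ∉ S := fun u hu hc => (Finset.disjoint_left.mp hd) hc hu
      have h1 : (∏ u ∈ S ∪ T, z u) = ∏ u ∈ T, x u := by
        rw [Finset.prod_union hd, Finset.prod_congr rfl hzS, Finset.prod_const_one, one_mul]
        exact Finset.prod_congr rfl fun u hu => hzNS u (hST u hu)
      have h2 : (∏ u ∈ (S ∪ T)ᶜ, (1 - z u)) = ∏ u ∈ (S ∪ T)ᶜ, (1 - x u) := by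
        refine Finset.prod_congr rfl fun u hu => ?_
        have : u ∉ S := fun h => (Finset.mem_compl.mp hu) (Finset.mem_union_left _ h)
        rw [hzNS u this]
      have h3 : (∏ u ∈ T, y u) = ∏ u ∈ T, x u := by
        refine Finset.prod_congr rfl fun u hu => ?_
        simp [hydef, hST u hu]
      have h4 : Tᶜ = S ∪ (S ∪ T)ᶜ := by
        ext u
        simp only [Finset.mem_compl, Finset.mem_union, not_or]
        constructor
        · intro h
          by_cases hS : u ∈ S
          · exact Or.inl hS
          · exact Or.inr ⟨hS, h⟩
        · rintro (h | ⟨_, h2⟩)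
          · exact fun hT => hST u hT h
          · exact h2
      have h5 : (∏ u ∈ Tᶜ, (1 - y u)) = ∏ u ∈ (S ∪ T)ᶜ, (1 - x u) := by
        have hdisj : Disjoint S ((S ∪ T)ᶜ) :=
          Finset.disjoint_left.mpr fun u hu hc =>
            (Finset.mem_compl.mp hc) (Finset.mem_union_left _ hu)
        rw [h4, Finset.prod_union hdisj]
        have hS1 : (∏ u ∈ S, (1 - y u)) = 1 := by
          apply Finset.prod_eq_one; intro u hu; simp [hydef, hu]
        rw [hS1, one_mul]
        refine Finset.prod_congr rfl fun u hu => ?_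
        have : u ∉ S := fun h => (Finset.mem_compl.mp hu) (Finset.mem_union_left _ h)
        simp [hydef, this]
      simp only [hpdef]
      rw [h1, h2, h3, h5]
    · -- both sides are zero
      obtain ⟨u, huS, huT⟩ := Finset.not_disjoint_iff.mp hd
      have hz0 : (∏ v ∈ (symmDiff T S)ᶜ, (1 - z v)) = 0 := by
        apply Finset.prod_eq_zero (i := u)
        · rw [Finset.mem_compl, Finset.mem_symmDiff]
          simp [huS, huT]
        · rw [hzS u huS]; ring
      have hp0 : p T = 0 := by
        simp only [hpdef]
        have : (∏ v ∈ T, y v) = 0 :=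
          Finset.prod_eq_zero huT (by simp [hydef, huS])
        simp [this]
      rw [hz0, hp0]
      ring
  -- pointwise inequality
  have step : ∀ T : Finset N, p T * (f S - f T) ≤ p T * f (S ∪ T) := by
    intro T
    by_cases hd : Disjoint S T
    · apply mul_le_mul_of_nonneg_left _ (hpnonneg T)
      have h1 := hsub (S ∪ T) Tᶜ
      have h2 : (S ∪ T) ∪ Tᶜ = univ := by
        rw [Finset.union_assoc, Finset.union_compl, Finset.union_eq_right]
        exact Finset.subset_univ S
      have h3 : (S ∪ T) ∩ Tᶜ = S := by
        ext u
        simp only [Finset.mem_inter, Finset.mem_union, Finset.mem_compl]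
        constructor
        · rintro ⟨h | h, hc⟩
          · exact h
          · exact absurd h hc
        · intro h
          exact ⟨Or.inl h, Finset.disjoint_left.mp hd h⟩
      rw [h2, h3, ← hsym T] at h1
      have := hnonneg univ
      linarith
    · obtain ⟨u, huS, huT⟩ := Finset.not_disjoint_iff.mp hd
      have hp0 : p T = 0 := by
        simp only [hpdef]
        have : (∏ v ∈ T, y v) = 0 :=
          Finset.prod_eq_zero huT (by simp [hydef, huS])
        simp [this]
      rw [hp0]; simp
  have hFy : multilinearExt f y = ∑ T : Finset N, p T * f T := by
    unfold multilinearExt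
    exact Finset.sum_congr rfl fun T _ => by simp only [hpdef]
  have hexp : ∑ T : Finset N, p T * (f S - f T)
      = f S - ∑ T : Finset N, p T * f T := by
    simp only [mul_sub]
    rw [Finset.sum_sub_distrib, ← Finset.sum_mul, hsum1, one_mul]
  have hlow : f S - multilinearExt f y ≤ multilinearExt f z := by
    rw [key, hFy, ← hexp]
    exact Finset.sum_le_sum fun T _ => step T
  have hyx := hmax y hy01
  linarith
end

section
/- Let f : 2^N → ℝ be a submodular function and A ⊆ N. Denote by A(p) a random subset of A where each element appears independently with probability p. Then E[f(A(p))] ≥ (1 − p)·f(∅) + p·f(A). -/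
open Finset

/-- for a submodular `f`, a set `A` and a probability `p`,
`E[f(A(p))] ≥ (1 − p)·f(∅) + p·f(A)`, where `A(p)` contains each element of `A`
independently with probability `p`. -/
theorem expected_value_random_subset {N : Type*} [Fintype N] [DecidableEq N]
    (f : Finset N → ℝ)
    (hf : ∀ S T : Finset N, f S + f T ≥ f (S ∪ T) + f (S ∩ T))
    (A : Finset N) (p : ℝ) (hp0 : 0 ≤ p) (hp1 : p ≤ 1) :
    ∑ B ∈ A.powerset, p ^ B.card * (1 - p) ^ (A.card - B.card) * f B ≥
      (1 - p) * f ∅ + p * f A := by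
  induction A using Finset.induction_on generalizing f with
  | empty => simp; linarith
  | @insert a A' ha ih =>
    have hcard : (insert a A').card = A'.card + 1 := Finset.card_insert_of_notMem ha
    rw [Finset.sum_powerset_insert ha]
    have h1 : ∑ B ∈ A'.powerset, p ^ B.card * (1-p) ^ ((insert a A').card - B.card) * f B
        = (1-p) * ∑ B ∈ A'.powerset, p ^ B.card * (1-p) ^ (A'.card - B.card) * f B := by
      rw [Finset.mul_sum]
      refine Finset.sum_congr rfl fun B hB => ?_
      have hBc : B.card ≤ A'.card := Finset.card_le_card (Finset.mem_powerset.mp hB)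
      rw [hcard, Nat.succ_sub hBc, pow_succ]
      ring
    have h2 : ∑ B ∈ A'.powerset, p ^ (insert a B).card * (1-p) ^ ((insert a A').card - (insert a B).card) * f (insert a B)
        = p * ∑ B ∈ A'.powerset, p ^ B.card * (1-p) ^ (A'.card - B.card) * f (insert a B) := by
      rw [Finset.mul_sum]
      refine Finset.sum_congr rfl fun B hB => ?_
      have haB : a ∉ B := fun h => ha (Finset.mem_powerset.mp hB h)
      rw [hcard, Finset.card_insert_of_notMem haB, Nat.add_sub_add_right, pow_succ]
      ring
    rw [h1, h2]
    have hg : ∀ S T : Finset N, f (insert a S) + f (insert a T) ≥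
        f (insert a S ∪ insert a T) + f (insert a S ∩ insert a T) := fun S T => hf _ _
    have hg' : ∀ S T : Finset N, f (insert a S) + f (insert a T) ≥
        f (insert a (S ∪ T)) + f (insert a (S ∩ T)) := by
      intro S T
      have := hg S T
      rwa [Finset.insert_union, Finset.union_insert, Finset.insert_idem,
        ← Finset.insert_inter_distrib] at this
      
    have ih1 := ih f hf
    have ih2 := ih (fun S => f (insert a S)) hg'
    have hsub := hf A' {a}
    have hU : A' ∪ {a} = insert a A' := by
      rw [Finset.union_comm, ← Finset.insert_eq]
    have hI : A' ∩ {a} = ∅ := by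
      rw [Finset.inter_comm, Finset.singleton_inter_of_notMem ha]
    rw [hU, hI] at hsub
    have hia : f (insert a ∅) = f {a} := by simp
    rw [hia] at ih2
    have h1p : 0 ≤ 1 - p := by linarith
    nlinarith [mul_le_mul_of_nonneg_left ih1 h1p, mul_le_mul_of_nonneg_left ih2 hp0,
      mul_le_mul_of_nonneg_left hsub (mul_nonneg hp0 h1p)]
end

section
/- Let f : 2^N → ℝ≥0 be a non-negative submodular function, and let R be a random subset of N in which each element appears with probability at most p (not necessarily independently). Then E[f(R)] ≥ (1 − p)·f(∅). -/
open Finset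

lemma dual_cert {N : Type*} [DecidableEq N]
    (f : Finset N → ℝ)
    (hsub : ∀ S T : Finset N, f S + f T ≥ f (S ∪ T) + f (S ∩ T)) :
    ∀ W : Finset N, ∀ c : ℝ, c ≤ f ∅ →
    ∃ z : N → ℝ, (∀ u, 0 ≤ z u) ∧ (∀ T, T ⊆ W → c ≤ f T + ∑ u ∈ T, z u) ∧
      ∃ T, T ⊆ W ∧ ∑ u ∈ W, z u ≤ max 0 (c - f T) := by
  intro W
  induction W using Finset.strongInduction with
  | _ W ih =>
  intro c hc
  rcases eq_or_ne W ∅ with rfl | hWne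
  · refine ⟨0, by simp, ?_, ∅, Subset.rfl, by simp [le_max_iff]⟩
    intro T hT
    rw [Finset.subset_empty] at hT
    subst hT; simpa using hc
  · have hempty : (∅ : Finset N) ∈ W.powerset.erase W := by
      simp [mem_erase, Ne.symm hWne, eq_comm]
    obtain ⟨A, hAmem, hAmin⟩ := (W.powerset.erase W).exists_min_image f ⟨∅, hempty⟩
    have hAW : A ⊆ W := mem_powerset.1 (mem_of_mem_erase hAmem)
    have hAne : A ≠ W := ne_of_mem_erase hAmem
    have hAss : A ⊂ W := Finset.ssubset_iff_subset_ne.2 ⟨hAW, hAne⟩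
    have hminA : ∀ T, T ⊆ W → T ≠ W → f A ≤ f T := fun T h1 h2 =>
      hAmin T (mem_erase.2 ⟨h2, mem_powerset.2 h1⟩)
    by_cases hcase : f A < c
    · -- recursive case : restrict to the minimizer A
      obtain ⟨z', hz'0, hz'i, T', hT'A, hT'bound⟩ := ih A hAss c hc
      set k : ℕ := (W \ A).card with hk
      have hkpos : 0 < (k : ℝ) := by
        have : 0 < k := card_pos.2 (sdiff_nonempty.2 (fun h => hAne (Subset.antisymm hAW h)))
        exact_mod_cast this
      set e : ℝ := max 0 (f A - f W) with he
      have he0 : 0 ≤ e := le_max_left _ _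
      have heA : f A - f W ≤ e := le_max_right _ _
      refine ⟨fun u => if u ∈ A then z' u else if u ∈ W then e / k else 0, ?_, ?_, ?_⟩
      · intro u
        by_cases h1 : u ∈ A
        · simpa [h1] using hz'0 u
        · by_cases h2 : u ∈ W <;> simp [h1, h2] <;> positivity
      · intro T hT
        have hsplit : ∑ u ∈ T, (if u ∈ A then z' u else if u ∈ W then e / k else 0)
            = (∑ u ∈ T ∩ A, z' u) + (T \ A).card * (e / k) := by
          rw [← Finset.sum_inter_add_sum_sdiff T A]
          congr 1
          · apply Finset.sum_congr rfl
            intro u hu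
            simp [(Finset.mem_inter.1 hu).2]
          · have hcongr : ∀ u ∈ T \ A, (if u ∈ A then z' u else if u ∈ W then e / k else 0) = e / k := by
              intro u hu
              have h1 : u ∉ A := (Finset.mem_sdiff.1 hu).2
              have h2 : u ∈ W := hT (Finset.mem_sdiff.1 hu).1
              simp [h1, h2]
            rw [Finset.sum_congr rfl hcongr, Finset.sum_const, nsmul_eq_mul]
        have hIH : c ≤ f (T ∩ A) + ∑ u ∈ T ∩ A, z' u :=
          hz'i (T ∩ A) (Finset.inter_subset_right)
        have hsubTA := hsub T A
        by_cases hTA : T ∪ A = W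
        · -- T covers W \ A
          have hdiff : T \ A = W \ A := by
            apply Finset.Subset.antisymm
            · exact Finset.sdiff_subset_sdiff hT Finset.Subset.rfl
            · intro u hu
              have h1 := Finset.mem_sdiff.1 hu
              have : u ∈ T ∪ A := by rw [hTA]; exact h1.1
              rcases Finset.mem_union.1 this with h | h
              · exact Finset.mem_sdiff.2 ⟨h, h1.2⟩
              · exact absurd h h1.2
          have hcard : ((T \ A).card : ℝ) * (e / k) = e := by
            rw [hdiff, ← hk]
            field_simp
          rw [hsplit, hcard]
          have hfT : f (T ∩ A) - e ≤ f T := by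
            rw [hTA] at hsubTA
            linarith
          linarith
        · -- T ∪ A is a proper subset of W
          have hfW : f A ≤ f (T ∪ A) := hminA (T ∪ A) (Finset.union_subset hT hAW) hTA
          have hfT : f (T ∩ A) ≤ f T := by linarith
          have hpos : 0 ≤ ((T \ A).card : ℝ) * (e / k) := by positivity
          rw [hsplit]
          linarith
      · -- the bound on the total sum
        have hsplit : ∑ u ∈ W, (if u ∈ A then z' u else if u ∈ W then e / k else 0)
            = (∑ u ∈ A, z' u) + e := by
          rw [← Finset.sum_inter_add_sum_sdiff W A]
          congr 1
          · rw [Finset.inter_eq_right.2 hAW]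
            apply Finset.sum_congr rfl
            intro u hu
            simp [hu]
          · have hcongr : ∀ u ∈ W \ A, (if u ∈ A then z' u else if u ∈ W then e / k else 0) = e / k := by
              intro u hu
              have h1 : u ∉ A := (Finset.mem_sdiff.1 hu).2
              have h2 : u ∈ W := (Finset.mem_sdiff.1 hu).1
              simp [h1, h2]
            rw [Finset.sum_congr rfl hcongr, Finset.sum_const, nsmul_eq_mul, ← hk]
            field_simp
        have hT'W : f A ≤ f T' := by
          apply hminA T' (hT'A.trans hAW)
          intro h
          exact hAne (Finset.Subset.antisymm hAW (h ▸ hT'A))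
        have hb1 : ∑ u ∈ A, z' u ≤ c - f A := by
          rcases max_cases 0 (c - f T') with ⟨h1, h2⟩ | ⟨h1, h2⟩ <;> rw [h1] at hT'bound <;> linarith
        by_cases hfWA : f W ≤ f A
        · refine ⟨W, Finset.Subset.rfl, ?_⟩
          rw [hsplit, he]
          rw [max_eq_right (by linarith)]
          have : c - f W ≤ max 0 (c - f W) := le_max_right _ _
          linarith
        · refine ⟨A, hAW, ?_⟩
          rw [hsplit, he]
          rw [max_eq_left (by linarith)]
          have : c - f A ≤ max 0 (c - f A) := le_max_right _ _
          linarith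
    · -- base case: all proper subsets have f ≥ c
      push_neg at hcase
      obtain ⟨u₀, hu₀⟩ := Finset.nonempty_iff_ne_empty.2 hWne
      refine ⟨fun u => if u = u₀ then max 0 (c - f W) else 0, ?_, ?_, W, Finset.Subset.rfl, ?_⟩
      · intro u
        by_cases h : u = u₀ <;> simp [h, le_max_iff]
      · intro T hT
        by_cases hTW : T = W
        · subst hTW
          rw [Finset.sum_ite_eq' T u₀, if_pos hu₀]
          have : c - f T ≤ max 0 (c - f T) := le_max_right _ _
          linarith
        · have h1 : c ≤ f T := hcase.trans (hminA T hT hTW)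
          have h2 : 0 ≤ ∑ u ∈ T, (if u = u₀ then max 0 (c - f W) else 0) := by
            apply Finset.sum_nonneg
            intro u _
            by_cases h : u = u₀ <;> simp [h, le_max_iff]
          linarith
      · rw [Finset.sum_ite_eq' W u₀, if_pos hu₀]

/-- for a non-negative submodular `f` and a random set `R` (with an
arbitrary joint distribution `μ`) in which each element appears with probability
at most `p`, `E[f(R)] ≥ (1 − p)·f(∅)`. -/
theorem expected_value_dependent_random_subset {N : Type*} [Fintype N] [DecidableEq N]
    (f : Finset N → ℝ)
    (hnonneg : ∀ S : Finset N, 0 ≤ f S)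
    (hsub : ∀ S T : Finset N, f S + f T ≥ f (S ∪ T) + f (S ∩ T))
    (μ : Finset N → ℝ) (hμ0 : ∀ S, 0 ≤ μ S) (hμ1 : ∑ S : Finset N, μ S = 1)
    (p : ℝ) (hp0 : 0 ≤ p) (hp1 : p ≤ 1)
    (hmarg : ∀ u : N, ∑ S ∈ (Finset.univ : Finset (Finset N)).filter (fun S => u ∈ S), μ S ≤ p) :
    ∑ S : Finset N, μ S * f S ≥ (1 - p) * f ∅ := by
  obtain ⟨z, hz0, hzi, T, -, hzb⟩ := dual_cert f hsub Finset.univ (f ∅) le_rfl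
  have hzsum : ∑ u : N, z u ≤ f ∅ := by
    refine hzb.trans (max_le (hnonneg ∅) ?_)
    linarith [hnonneg T]
  -- termwise lower bound
  have step1 : ∑ S : Finset N, μ S * (f ∅ - ∑ u ∈ S, z u) ≤ ∑ S : Finset N, μ S * f S := by
    apply Finset.sum_le_sum
    intro S _
    apply mul_le_mul_of_nonneg_left _ (hμ0 S)
    linarith [hzi S (Finset.subset_univ S)]
  -- compute the left-hand side
  have step2 : ∑ S : Finset N, μ S * (f ∅ - ∑ u ∈ S, z u)
      = f ∅ - ∑ S : Finset N, μ S * ∑ u ∈ S, z u := by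
    simp only [mul_sub]
    rw [Finset.sum_sub_distrib, ← Finset.sum_mul, hμ1, one_mul]
  have step3 : ∑ S : Finset N, μ S * ∑ u ∈ S, z u
      = ∑ u : N, (∑ S ∈ (Finset.univ : Finset (Finset N)).filter (fun S => u ∈ S), μ S) * z u := by
    have : ∀ S : Finset N, μ S * ∑ u ∈ S, z u
        = ∑ u : N, (if u ∈ S then μ S * z u else 0) := by
      intro S
      rw [Finset.mul_sum, Finset.sum_ite_mem, Finset.univ_inter]
    rw [Finset.sum_congr rfl (fun S _ => this S), Finset.sum_comm]
    apply Finset.sum_congr rfl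
    intro u _
    rw [Finset.sum_ite, Finset.sum_const_zero, add_zero, Finset.sum_mul]
  have step4 : ∑ u : N, (∑ S ∈ (Finset.univ : Finset (Finset N)).filter (fun S => u ∈ S), μ S) * z u
      ≤ p * ∑ u : N, z u := by
    rw [Finset.mul_sum]
    apply Finset.sum_le_sum
    intro u _
    exact mul_le_mul_of_nonneg_right (hmarg u) (hz0 u)
  have hf0 : 0 ≤ f ∅ := hnonneg ∅
  have hps : p * ∑ u : N, z u ≤ p * f ∅ := mul_le_mul_of_nonneg_left hzsum hp0
  rw [ge_iff_le]
  calc (1 - p) * f ∅ = f ∅ - p * f ∅ := by ring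
    _ ≤ f ∅ - ∑ S : Finset N, μ S * ∑ u ∈ S, z u := by
        rw [step3]; linarith
    _ = ∑ S : Finset N, μ S * (f ∅ - ∑ u ∈ S, z u) := step2.symm
    _ ≤ ∑ S : Finset N, μ S * f S := step1
end

section
/- Let f : 2^N → ℝ≥0 be a non-negative submodular function, let A_1, …, A_ℓ be ℓ ≥ 2 pairwise disjoint subsets of N, and let 1 ≤ h ≤ ℓ be an integer. If R(A, h) denotes the union of h of the sets A_1, …, A_ℓ chosen uniformly at random without replacement, then E[f(R(A, h))] ≥ (1 − (h−1)/(ℓ−1)) · (Σ_{i=1}^ℓ f(A_i))/ℓ. -/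
open Finset

/-- Reindexing: summing `F I j` over pairs (set `I` of size `m`, element `j ∉ I`) equals
summing over pairs (set `J` of size `m+1`, element `j ∈ J`) of `F (J.erase j) j`. -/
lemma aux_sum_ins {α : Type*} [DecidableEq α] (u : Finset α) (m : ℕ) (F : Finset α → α → ℝ) :
    ∑ I ∈ u.powersetCard m, ∑ j ∈ u \ I, F I j
      = ∑ J ∈ u.powersetCard (m+1), ∑ j ∈ J, F (J.erase j) j := by
  rw [Finset.sum_sigma' (u.powersetCard m) (fun I => u \ I) (fun I j => F I j),
    Finset.sum_sigma' (u.powersetCard (m+1)) (fun J => J) (fun J j => F (J.erase j) j)]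
  refine Finset.sum_nbij' (fun p => ⟨insert p.2 p.1, p.2⟩) (fun p => ⟨p.1.erase p.2, p.2⟩)
    ?_ ?_ ?_ ?_ ?_
  · rintro ⟨I, j⟩ hp
    simp only [Finset.mem_sigma, Finset.mem_powersetCard, Finset.mem_sdiff] at hp ⊢
    obtain ⟨⟨hIu, hIc⟩, hju, hjI⟩ := hp
    exact ⟨⟨Finset.insert_subset hju hIu, by rw [Finset.card_insert_of_notMem hjI, hIc]⟩,
      Finset.mem_insert_self _ _⟩
  · rintro ⟨J, j⟩ hp
    simp only [Finset.mem_sigma, Finset.mem_powersetCard, Finset.mem_sdiff] at hp ⊢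
    obtain ⟨⟨hJu, hJc⟩, hjJ⟩ := hp
    refine ⟨⟨(Finset.erase_subset _ _).trans hJu, ?_⟩, hJu hjJ, Finset.notMem_erase _ _⟩
    rw [Finset.card_erase_of_mem hjJ, hJc]; rfl
  · rintro ⟨I, j⟩ hp
    simp only [Finset.mem_sigma, Finset.mem_powersetCard, Finset.mem_sdiff] at hp
    simp [Finset.erase_insert hp.2.2]
  · rintro ⟨J, j⟩ hp
    simp only [Finset.mem_sigma, Finset.mem_powersetCard] at hp
    simp [Finset.insert_erase hp.2]
  · rintro ⟨I, j⟩ hp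
    simp only [Finset.mem_sigma, Finset.mem_powersetCard, Finset.mem_sdiff] at hp
    simp [Finset.erase_insert hp.2.2]

/-- Symmetry of the sum over ordered pairs of distinct elements. -/
lemma aux_sum_erase_symm {α : Type*} [DecidableEq α] (s : Finset α) (F : α → α → ℝ) :
    ∑ j ∈ s, ∑ k ∈ s.erase j, F j k = ∑ j ∈ s, ∑ k ∈ s.erase j, F k j := by
  have key : ∀ G : α → α → ℝ, ∑ j ∈ s, ∑ k ∈ s.erase j, G j k
      = ∑ p ∈ (s ×ˢ s).filter (fun p => p.2 ≠ p.1), G p.1 p.2 := by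
    intro G
    rw [Finset.sum_filter, Finset.sum_product]
    refine Finset.sum_congr rfl fun j hj => ?_
    rw [← Finset.filter_ne' s j, Finset.sum_filter]
  rw [key, key]
  refine Finset.sum_nbij' (fun p => (p.2, p.1)) (fun p => (p.2, p.1)) ?_ ?_ ?_ ?_ ?_ <;>
    rintro ⟨a, b⟩ hp <;>
    simp only [Finset.mem_filter, Finset.mem_product] at hp ⊢ <;>
    tauto

/-- The key combinatorial inequality coming from submodularity. -/
lemma aux_step {α : Type*} [DecidableEq α] (u : Finset α) (g : Finset α → ℝ)
    (hg : ∀ I : Finset α, ∀ j k : α, j ∉ I → k ∉ I → j ≠ k →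
      g (insert k (insert j I)) + g I ≤ g (insert j I) + g (insert k I))
    (m : ℕ) :
    ((m+1 : ℕ) : ℝ) * ((m+2 : ℕ) : ℝ) * ∑ K ∈ u.powersetCard (m+2), g K
      + ((u.card - m : ℕ) : ℝ) * ((u.card - m - 1 : ℕ) : ℝ) * ∑ I ∈ u.powersetCard m, g I
    ≤ 2 * (((m+1 : ℕ) : ℝ) * ((u.card - m - 1 : ℕ) : ℝ)) * ∑ J ∈ u.powersetCard (m+1), g J := by
  set n := u.card with hn
  have hcardsd : ∀ I ∈ u.powersetCard m, (u \ I).card = n - m := by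
    intro I hI
    rw [Finset.mem_powersetCard] at hI
    rw [Finset.card_sdiff_of_subset hI.1, hI.2]
  have hcarderase : ∀ I ∈ u.powersetCard m, ∀ j ∈ u \ I, ((u \ I).erase j).card = n - m - 1 := by
    intro I hI j hj
    rw [Finset.card_erase_of_mem hj, hcardsd I hI]
  have key : ∑ I ∈ u.powersetCard m, ∑ j ∈ u \ I, ∑ k ∈ (u \ I).erase j,
        (g (insert k (insert j I)) + g I)
      ≤ ∑ I ∈ u.powersetCard m, ∑ j ∈ u \ I, ∑ k ∈ (u \ I).erase j,
        (g (insert j I) + g (insert k I)) := by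
    refine Finset.sum_le_sum fun I hI => Finset.sum_le_sum fun j hj => Finset.sum_le_sum
      fun k hk => ?_
    have hjI : j ∉ I := (Finset.mem_sdiff.mp hj).2
    have hkj : k ≠ j := Finset.ne_of_mem_erase hk
    have hkI : k ∉ I := (Finset.mem_sdiff.mp (Finset.mem_of_mem_erase hk)).2
    exact hg I j k hjI hkI (Ne.symm hkj)
  have split : ∀ G H : Finset α → α → α → ℝ,
      ∑ I ∈ u.powersetCard m, ∑ j ∈ u \ I, ∑ k ∈ (u \ I).erase j, (G I j k + H I j k)
      = (∑ I ∈ u.powersetCard m, ∑ j ∈ u \ I, ∑ k ∈ (u \ I).erase j, G I j k)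
        + ∑ I ∈ u.powersetCard m, ∑ j ∈ u \ I, ∑ k ∈ (u \ I).erase j, H I j k := by
    intro G H
    simp [Finset.sum_add_distrib]
  rw [split, split] at key
  have hT1 : ∑ I ∈ u.powersetCard m, ∑ j ∈ u \ I, ∑ k ∈ (u \ I).erase j, g (insert j I)
      = ((n - m - 1 : ℕ) : ℝ) * (((m+1 : ℕ) : ℝ) * ∑ J ∈ u.powersetCard (m+1), g J) := by
    have e1 : ∑ I ∈ u.powersetCard m, ∑ j ∈ u \ I, ∑ k ∈ (u \ I).erase j, g (insert j I)
        = ∑ I ∈ u.powersetCard m, ∑ j ∈ u \ I, ((n - m - 1 : ℕ) : ℝ) * g (insert j I) := by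
      refine Finset.sum_congr rfl fun I hI => Finset.sum_congr rfl fun j hj => ?_
      rw [Finset.sum_const, hcarderase I hI j hj, nsmul_eq_mul]
    rw [e1]
    simp_rw [← Finset.mul_sum]
    congr 1
    rw [aux_sum_ins u m (fun I j => g (insert j I)), Finset.mul_sum]
    refine Finset.sum_congr rfl fun J hJ => ?_
    have hc : J.card = m + 1 := (Finset.mem_powersetCard.mp hJ).2
    rw [Finset.sum_congr rfl fun j hj => by rw [Finset.insert_erase hj],
      Finset.sum_const, hc, nsmul_eq_mul]
  have hT2 : ∑ I ∈ u.powersetCard m, ∑ j ∈ u \ I, ∑ k ∈ (u \ I).erase j, g (insert k I)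
      = ∑ I ∈ u.powersetCard m, ∑ j ∈ u \ I, ∑ k ∈ (u \ I).erase j, g (insert j I) := by
    refine Finset.sum_congr rfl fun I _ => ?_
    exact aux_sum_erase_symm (u \ I) (fun j k => g (insert k I))
  have hT3 : ∑ I ∈ u.powersetCard m, ∑ j ∈ u \ I, ∑ k ∈ (u \ I).erase j,
        g (insert k (insert j I))
      = ((m+1 : ℕ) : ℝ) * (((m+2 : ℕ) : ℝ) * ∑ K ∈ u.powersetCard (m+2), g K) := by
    have e1 : ∑ I ∈ u.powersetCard m, ∑ j ∈ u \ I, ∑ k ∈ (u \ I).erase j,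
          g (insert k (insert j I))
        = ∑ I ∈ u.powersetCard m, ∑ j ∈ u \ I, ∑ k ∈ u \ insert j I,
          g (insert k (insert j I)) := by
      refine Finset.sum_congr rfl fun I _ => Finset.sum_congr rfl fun j _ => ?_
      rw [Finset.sdiff_insert]
    rw [e1, aux_sum_ins u m (fun I j => ∑ k ∈ u \ insert j I, g (insert k (insert j I)))]
    have e2 : ∀ J ∈ u.powersetCard (m+1), ∀ j ∈ J,
        ∑ k ∈ u \ insert j (J.erase j), g (insert k (insert j (J.erase j)))
          = ∑ k ∈ u \ J, g (insert k J) := by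
      intro J _ j hj
      rw [Finset.insert_erase hj]
    rw [Finset.sum_congr rfl fun J hJ => Finset.sum_congr rfl (e2 J hJ)]
    have e3 : ∀ J ∈ u.powersetCard (m+1),
        ∑ _j ∈ J, ∑ k ∈ u \ J, g (insert k J)
          = ((m+1 : ℕ) : ℝ) * ∑ k ∈ u \ J, g (insert k J) := by
      intro J hJ
      rw [Finset.sum_const, (Finset.mem_powersetCard.mp hJ).2, nsmul_eq_mul]
    rw [Finset.sum_congr rfl e3, ← Finset.mul_sum]
    congr 1
    rw [aux_sum_ins u (m+1) (fun J k => g (insert k J)), Finset.mul_sum]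
    refine Finset.sum_congr rfl fun K hK => ?_
    have hc : K.card = m + 2 := (Finset.mem_powersetCard.mp hK).2
    rw [Finset.sum_congr rfl fun k hk => by rw [Finset.insert_erase hk],
      Finset.sum_const, hc, nsmul_eq_mul]
  have hT4 : ∑ I ∈ u.powersetCard m, ∑ j ∈ u \ I, ∑ k ∈ (u \ I).erase j, g I
      = ((n - m : ℕ) : ℝ) * (((n - m - 1 : ℕ) : ℝ) * ∑ I ∈ u.powersetCard m, g I) := by
    have e1 : ∀ I ∈ u.powersetCard m, ∑ j ∈ u \ I, ∑ k ∈ (u \ I).erase j, g I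
        = ((n - m : ℕ) : ℝ) * (((n - m - 1 : ℕ) : ℝ) * g I) := by
      intro I hI
      rw [Finset.sum_congr rfl fun j hj => by
        rw [Finset.sum_const, hcarderase I hI j hj, nsmul_eq_mul]]
      rw [Finset.sum_const, hcardsd I hI, nsmul_eq_mul]
    rw [Finset.sum_congr rfl e1, ← Finset.mul_sum, ← Finset.mul_sum]
  rw [hT1, hT2, hT3, hT4, hT1] at key
  linarith

/-- The normalized ("expected value") form of the step inequality: concavity. -/
lemma aux_phi_step {α : Type*} [DecidableEq α] (u : Finset α) (g : Finset α → ℝ)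
    (hg : ∀ I : Finset α, ∀ j k : α, j ∉ I → k ∉ I → j ≠ k →
      g (insert k (insert j I)) + g I ≤ g (insert j I) + g (insert k I))
    (m : ℕ) (hm : m + 2 ≤ u.card) :
    (∑ K ∈ u.powersetCard (m+2), g K) / (u.card.choose (m+2) : ℝ)
      + (∑ I ∈ u.powersetCard m, g I) / (u.card.choose m : ℝ)
    ≤ 2 * ((∑ J ∈ u.powersetCard (m+1), g J) / (u.card.choose (m+1) : ℝ)) := by
  set n := u.card with hn
  set S2 := ∑ K ∈ u.powersetCard (m+2), g K with hS2
  set S1 := ∑ J ∈ u.powersetCard (m+1), g J with hS1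
  set S0 := ∑ I ∈ u.powersetCard m, g I with hS0
  have hC2 : (0:ℝ) < (n.choose (m+2) : ℝ) := by
    exact_mod_cast Nat.choose_pos hm
  have hC1 : (0:ℝ) < (n.choose (m+1) : ℝ) := by
    exact_mod_cast Nat.choose_pos (by omega)
  have hC0 : (0:ℝ) < (n.choose m : ℝ) := by
    exact_mod_cast Nat.choose_pos (by omega)
  have idA : (n.choose (m+2) : ℝ) * ((m+2 : ℕ) : ℝ)
      = (n.choose (m+1) : ℝ) * ((n - m - 1 : ℕ) : ℝ) := by
    have := Nat.choose_succ_right_eq n (m+1)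
    have h2 : n - (m+1) = n - m - 1 := by omega
    rw [h2] at this
    exact_mod_cast this
  have idB : (n.choose (m+1) : ℝ) * ((m+1 : ℕ) : ℝ)
      = (n.choose m : ℝ) * ((n - m : ℕ) : ℝ) := by
    exact_mod_cast Nat.choose_succ_right_eq n m
  have key := aux_step u g hg m
  rw [← hn, ← hS2, ← hS1, ← hS0] at key
  set x := S2 / (n.choose (m+2) : ℝ) with hx
  set z := S1 / (n.choose (m+1) : ℝ) with hz
  set y := S0 / (n.choose m : ℝ) with hy
  have f2 : S2 = x * (n.choose (m+2) : ℝ) := by rw [hx, div_mul_cancel₀ _ hC2.ne']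
  have f1 : S1 = z * (n.choose (m+1) : ℝ) := by rw [hz, div_mul_cancel₀ _ hC1.ne']
  have f0 : S0 = y * (n.choose m : ℝ) := by rw [hy, div_mul_cancel₀ _ hC0.ne']
  rw [f2, f1, f0] at key
  have e1 : ((m+1 : ℕ) : ℝ) * ((m+2 : ℕ) : ℝ) * (x * (n.choose (m+2) : ℝ))
      = ((m+1 : ℕ) : ℝ) * ((n - m - 1 : ℕ) : ℝ) * (n.choose (m+1) : ℝ) * x := by
    linear_combination ((m+1 : ℕ) : ℝ) * x * idA
  have e0 : ((n - m : ℕ) : ℝ) * ((n - m - 1 : ℕ) : ℝ) * (y * (n.choose m : ℝ))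
      = ((m+1 : ℕ) : ℝ) * ((n - m - 1 : ℕ) : ℝ) * (n.choose (m+1) : ℝ) * y := by
    linear_combination (-((n - m - 1 : ℕ) : ℝ)) * y * idB
  rw [e1, e0] at key
  have hc1 : (0:ℝ) < ((n - m - 1 : ℕ) : ℝ) := by
    have h1 : 1 ≤ n - m - 1 := by omega
    exact_mod_cast Nat.lt_of_lt_of_le Nat.zero_lt_one h1
  have hpos : (0:ℝ) < ((m+1 : ℕ) : ℝ) * ((n - m - 1 : ℕ) : ℝ) * (n.choose (m+1) : ℝ) := by
    have hm1 : (0:ℝ) < ((m+1 : ℕ) : ℝ) := by exact_mod_cast Nat.succ_pos m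
    positivity
  nlinarith [key, hpos]

/-- A concave sequence lies above its chords. -/
lemma aux_concave_interp (φ : ℕ → ℝ) (n : ℕ)
    (hstep : ∀ m : ℕ, m + 2 ≤ n → φ (m+2) + φ m ≤ 2 * φ (m+1))
    (h : ℕ) (hh1 : 1 ≤ h) (hhn : h ≤ n) :
    ((n : ℝ) - h) * φ 1 + ((h : ℝ) - 1) * φ n ≤ ((n : ℝ) - 1) * φ h := by
  have mono : ∀ a b : ℕ, a ≤ b → b + 1 ≤ n → φ (b+1) - φ b ≤ φ (a+1) - φ a := by
    intro a b hab
    induction b, hab using Nat.le_induction with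
    | base => intro _; exact le_refl _
    | succ b hab ih =>
      intro hb
      have h1 : φ (b+2) - φ (b+1) ≤ φ (b+1) - φ b := by
        have := hstep b hb
        linarith
      have h2 := ih (by omega)
      linarith
  have tele : ∀ a b : ℕ, a ≤ b → ∑ m ∈ Finset.Ico a b, (φ (m+1) - φ m) = φ b - φ a := by
    intro a b hab
    rw [Finset.sum_Ico_eq_sub _ hab, Finset.sum_range_sub, Finset.sum_range_sub]
    ring
  rcases eq_or_lt_of_le hh1 with heq | hlt
  · rw [← heq]
    push_cast
    ring_nf
    linarith [le_refl (φ 1)]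
  · obtain ⟨t, rfl⟩ : ∃ t, h = t + 2 := ⟨h - 2, by omega⟩
    set d := φ (t+2) - φ (t+1) with hd
    have hi : ((t:ℝ) + 1) * d ≤ φ (t+2) - φ 1 := by
      rw [← tele 1 (t+2) (by omega)]
      calc ((t:ℝ) + 1) * d = ∑ m ∈ Finset.Ico 1 (t+2), d := by
            rw [Finset.sum_const, Nat.card_Ico, nsmul_eq_mul]; push_cast; ring
        _ ≤ ∑ m ∈ Finset.Ico 1 (t+2), (φ (m+1) - φ m) := by
            refine Finset.sum_le_sum fun m hm => ?_
            rw [Finset.mem_Ico] at hm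
            exact mono m (t+1) (by omega) (by omega)
    have hii : φ n - φ (t+2) ≤ ((n:ℝ) - (t+2)) * d := by
      rw [← tele (t+2) n (by omega)]
      calc ∑ m ∈ Finset.Ico (t+2) n, (φ (m+1) - φ m)
          ≤ ∑ m ∈ Finset.Ico (t+2) n, d := by
            refine Finset.sum_le_sum fun m hm => ?_
            rw [Finset.mem_Ico] at hm
            exact mono (t+1) m (by omega) (by omega)
        _ = ((n:ℝ) - (t+2)) * d := by
            rw [Finset.sum_const, Nat.card_Ico, nsmul_eq_mul, Nat.cast_sub (by omega)]
            push_cast; ring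
    have hnh : (0:ℝ) ≤ (n:ℝ) - (t+2) := by
      have : ((t:ℝ) + 2) ≤ n := by exact_mod_cast hhn
      linarith
    have hh0 : (0:ℝ) ≤ (t:ℝ) + 1 := by positivity
    push_cast
    nlinarith [mul_le_mul_of_nonneg_left hi hnh, mul_le_mul_of_nonneg_left hii hh0]

/-- for a non-negative submodular `f`, pairwise disjoint sets
`A 0, …, A (ℓ-1)` with `ℓ ≥ 2`, and `1 ≤ h ≤ ℓ`, the expected value of the union of a
uniformly random size-`h` subcollection satisfies
`E[f(R(A, h))] ≥ (1 − (h−1)/(ℓ−1)) · (Σ_i f(A_i))/ℓ`. -/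
theorem expected_value_disjoint_unions {N : Type*} [Fintype N] [DecidableEq N]
    (f : Finset N → ℝ)
    (hnonneg : ∀ S : Finset N, 0 ≤ f S)
    (hsub : ∀ S T : Finset N, f S + f T ≥ f (S ∪ T) + f (S ∩ T))
    (ℓ : ℕ) (hℓ : 2 ≤ ℓ) (A : Fin ℓ → Finset N)
    (hdisj : ∀ i j : Fin ℓ, i ≠ j → Disjoint (A i) (A j))
    (h : ℕ) (hh1 : 1 ≤ h) (hhℓ : h ≤ ℓ) :
    (∑ I ∈ (Finset.univ : Finset (Fin ℓ)).powersetCard h, f (I.biUnion A)) /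
        (Nat.choose ℓ h : ℝ) ≥
      (1 - ((h : ℝ) - 1) / ((ℓ : ℝ) - 1)) * ((∑ i : Fin ℓ, f (A i)) / (ℓ : ℝ)) := by
  classical
  set u : Finset (Fin ℓ) := Finset.univ with hu
  have hcard : u.card = ℓ := by simp [hu]
  set g : Finset (Fin ℓ) → ℝ := fun I => f (I.biUnion A) with hgdef
  -- submodularity of g
  have hg : ∀ I : Finset (Fin ℓ), ∀ j k : Fin ℓ, j ∉ I → k ∉ I → j ≠ k →
      g (insert k (insert j I)) + g I ≤ g (insert j I) + g (insert k I) := by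
    intro I j k hjI hkI hjk
    have hunion : (insert j I).biUnion A ∪ (insert k I).biUnion A
        = (insert k (insert j I)).biUnion A := by
      ext x
      simp only [Finset.mem_union, Finset.mem_biUnion, Finset.mem_insert]
      constructor
      · rintro (⟨a, (rfl | ha), hx⟩ | ⟨a, (rfl | ha), hx⟩)
        · exact ⟨a, Or.inr (Or.inl rfl), hx⟩
        · exact ⟨a, Or.inr (Or.inr ha), hx⟩
        · exact ⟨a, Or.inl rfl, hx⟩
        · exact ⟨a, Or.inr (Or.inr ha), hx⟩
      · rintro ⟨a, (rfl | rfl | ha), hx⟩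
        · exact Or.inr ⟨a, Or.inl rfl, hx⟩
        · exact Or.inl ⟨a, Or.inl rfl, hx⟩
        · exact Or.inl ⟨a, Or.inr ha, hx⟩
    have hinter : (insert j I).biUnion A ∩ (insert k I).biUnion A = I.biUnion A := by
      ext x
      simp only [Finset.mem_inter, Finset.mem_biUnion, Finset.mem_insert]
      constructor
      · rintro ⟨⟨a, (rfl | ha), hxa⟩, ⟨b, (rfl | hb), hxb⟩⟩
        · exact absurd (Finset.disjoint_left.mp (hdisj a b hjk) hxa) (fun c => c hxb)
        · exact ⟨b, hb, hxb⟩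
        · exact ⟨a, ha, hxa⟩
        · exact ⟨a, ha, hxa⟩
      · rintro ⟨a, ha, hxa⟩
        exact ⟨⟨a, Or.inr ha, hxa⟩, ⟨a, Or.inr ha, hxa⟩⟩
    have := hsub ((insert j I).biUnion A) ((insert k I).biUnion A)
    rw [hunion, hinter] at this
    simpa [hgdef] using this
  -- the normalized expected values
  set φ : ℕ → ℝ := fun k => (∑ I ∈ u.powersetCard k, g I) / (ℓ.choose k : ℝ) with hφ
  have hstep : ∀ m : ℕ, m + 2 ≤ ℓ → φ (m+2) + φ m ≤ 2 * φ (m+1) := by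
    intro m hm
    have := aux_phi_step u g hg m (by rw [hcard]; exact hm)
    rw [hcard] at this
    exact this
  have interp := aux_concave_interp φ ℓ hstep h hh1 hhℓ
  -- φ ℓ ≥ 0
  have hφℓ : 0 ≤ φ ℓ := by
    apply div_nonneg
    · exact Finset.sum_nonneg fun I _ => hnonneg _
    · positivity
  -- φ 1 = (∑ i, f (A i)) / ℓ
  have hφ1 : φ 1 = (∑ i : Fin ℓ, f (A i)) / (ℓ : ℝ) := by
    rw [hφ]
    simp only [Nat.choose_one_right]
    congr 1
    rw [Finset.powersetCard_one, Finset.sum_map]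
    refine Finset.sum_congr rfl fun i _ => ?_
    simp [hgdef]
  have hl1 : (0:ℝ) < (ℓ:ℝ) - 1 := by
    have : (2:ℝ) ≤ (ℓ:ℝ) := by exact_mod_cast hℓ
    linarith
  have hcoef : (1 - ((h : ℝ) - 1) / ((ℓ : ℝ) - 1)) = ((ℓ:ℝ) - h) / ((ℓ:ℝ) - 1) := by
    rw [eq_div_iff hl1.ne', sub_mul, div_mul_cancel₀ _ hl1.ne']
    ring
  have hgoalrw : (1 - ((h : ℝ) - 1) / ((ℓ : ℝ) - 1)) * ((∑ i : Fin ℓ, f (A i)) / (ℓ : ℝ))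
      = (((ℓ:ℝ) - h) * φ 1) / ((ℓ:ℝ) - 1) := by
    rw [hcoef, hφ1, div_mul_eq_mul_div]
  have hLHS : (∑ I ∈ (Finset.univ : Finset (Fin ℓ)).powersetCard h, f (I.biUnion A)) /
      (Nat.choose ℓ h : ℝ) = φ h := rfl
  rw [ge_iff_le, hgoalrw, hLHS, div_le_iff₀ hl1]
  have hh1r : (0:ℝ) ≤ (h:ℝ) - 1 := by
    have : (1:ℝ) ≤ (h:ℝ) := by exact_mod_cast hh1
    linarith
  nlinarith [interp, mul_nonneg hh1r hφℓ]
end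

section
/- Let f : 2^N → ℝ≥0 be a non-negative submodular function, let A_1, …, A_ℓ be subsets of N, and let p ∈ [0,1]. Let A_i(p) denote an independent random subset of A_i containing each element with probability p independently. Then E[f(∪_{i=1}^ℓ A_i(p))] ≥ Σ_{I ⊆ [ℓ]} p^{|I|}(1−p)^{ℓ−|I|} · f(∪_{i∈I} A_i). -/
open Finset

lemma sample_key {N : Type*} [DecidableEq N] (p : ℝ) (hp0 : 0 ≤ p) (hp1 : p ≤ 1)
    (A : Finset N) :
    ∀ f : Finset N → ℝ, (∀ S, 0 ≤ f S) →
      (∀ S T : Finset N, f S + f T ≥ f (S ∪ T) + f (S ∩ T)) →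
      ∑ B ∈ A.powerset, p ^ B.card * (1 - p) ^ (A.card - B.card) * f B ≥
        (1 - p) * f ∅ + p * f A := by
  induction A using Finset.induction with
  | empty => intro f hnn hsub; simp; linarith
  | @insert a s ha ih =>
    intro f hnn hsub
    have hdisj : Disjoint s.powerset (s.powerset.image (insert a)) := by
      rw [Finset.disjoint_left]
      intro B hB hB'
      simp only [Finset.mem_image, Finset.mem_powerset] at hB hB'
      obtain ⟨C, hC, hCB⟩ := hB'
      exact ha (hB (hCB ▸ Finset.mem_insert_self a C))
    have hinj : Set.InjOn (insert a) (↑s.powerset : Set (Finset N)) := by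
      intro x hx y hy hxy
      simp only [Finset.coe_powerset, Set.mem_preimage, Set.mem_powerset_iff] at hx hy
      have hax : a ∉ x := fun h => ha (hx h)
      have hay : a ∉ y := fun h => ha (hy h)
      rw [← Finset.erase_insert hax, ← Finset.erase_insert hay, hxy]
    rw [Finset.powerset_insert, Finset.sum_union hdisj, Finset.sum_image (fun x hx y hy => hinj hx hy)]
    have hcard : (insert a s).card = s.card + 1 := Finset.card_insert_of_notMem ha
    set g : Finset N → ℝ := fun B => (1 - p) * f B + p * f (insert a B) with hg
    have hgnn : ∀ S, 0 ≤ g S := fun S =>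
      add_nonneg (mul_nonneg (by linarith) (hnn S)) (mul_nonneg hp0 (hnn _))
    have hgsub : ∀ S T : Finset N, g S + g T ≥ g (S ∪ T) + g (S ∩ T) := by
      intro S T
      have h1 := hsub S T
      have h2 := hsub (insert a S) (insert a T)
      rw [Finset.insert_union, Finset.union_insert, Finset.insert_idem] at h2
      have hii : insert a S ∩ insert a T = insert a (S ∩ T) := by
        ext x; simp [Finset.mem_insert]; tauto
      rw [hii] at h2
      simp only [hg]
      nlinarith
    have hsum : ∑ B ∈ s.powerset, p ^ B.card * (1 - p) ^ ((insert a s).card - B.card) * f B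
        + ∑ B ∈ s.powerset, p ^ (insert a B).card * (1 - p) ^ ((insert a s).card - (insert a B).card) * f (insert a B)
        = ∑ B ∈ s.powerset, p ^ B.card * (1 - p) ^ (s.card - B.card) * g B := by
      rw [← Finset.sum_add_distrib]
      apply Finset.sum_congr rfl
      intro B hB
      rw [Finset.mem_powerset] at hB
      have haB : a ∉ B := fun h => ha (hB h)
      have hc1 : (insert a B).card = B.card + 1 := Finset.card_insert_of_notMem haB
      have hle : B.card ≤ s.card := Finset.card_le_card hB
      rw [hcard, hc1]
      have h1 : s.card + 1 - B.card = (s.card - B.card) + 1 := by omega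
      have h2 : s.card + 1 - (B.card + 1) = s.card - B.card := by omega
      rw [h1, h2, hg]
      ring
    rw [hsum]
    have := ih g hgnn hgsub
    have hfin : (1 - p) * g ∅ + p * g s ≥ (1 - p) * f ∅ + p * f (insert a s) := by
      simp only [hg]
      have h3 := hsub {a} s
      have hu : ({a} : Finset N) ∪ s = insert a s := by
        ext x; simp [Finset.mem_insert]
      have hi : ({a} : Finset N) ∩ s = ∅ := by
        ext x
        simp only [Finset.mem_inter, Finset.mem_singleton, Finset.notMem_empty, iff_false]
        rintro ⟨rfl, hx⟩; exact ha hx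
      rw [hu, hi] at h3
      have hia : insert a ∅ = ({a} : Finset N) := by simp
      rw [hia]
      have H : 0 ≤ p * (1 - p) * (f {a} + f s - f (insert a s) - f ∅) :=
        mul_nonneg (mul_nonneg hp0 (by linarith)) (by linarith)
      nlinarith [H]
    linarith

lemma sum_powerset_map {n : ℕ} (e : Fin n ↪ Fin (n+1)) (g : Finset (Fin (n+1)) → ℝ) :
    ∑ t ∈ ((univ : Finset (Fin n)).map e).powerset, g t = ∑ I : Finset (Fin n), g (I.map e) := by
  have hmp : ∀ t : Finset (Fin (n+1)), t ⊆ univ.map e →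
      (t.preimage e e.injective.injOn).map e = t := by
    intro t ht
    ext x
    simp only [Finset.mem_map, Finset.mem_preimage]
    constructor
    · rintro ⟨y, hy, rfl⟩; exact hy
    · intro hx
      obtain ⟨y, -, rfl⟩ := Finset.mem_map.1 (ht hx)
      exact ⟨y, hx, rfl⟩
  refine Finset.sum_nbij' (fun t => t.preimage e e.injective.injOn) (fun I => I.map e)
    (fun a _ => mem_univ _) ?_ ?_ ?_ ?_
  · intro I _
    simp only [Finset.mem_powerset]
    intro x hx
    obtain ⟨y, -, rfl⟩ := Finset.mem_map.1 hx
    exact Finset.mem_map_of_mem e (mem_univ y)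
  · intro t ht; exact hmp t (Finset.mem_powerset.1 ht)
  · intro I _; ext x; simp [Finset.mem_preimage, e.injective.eq_iff]
  · intro t ht; rw [hmp t (Finset.mem_powerset.1 ht)]

section
variable {N : Type*} [Fintype N] [DecidableEq N]

lemma main_aux (f : Finset N → ℝ) (hnonneg : ∀ S : Finset N, 0 ≤ f S)
    (hsub : ∀ S T : Finset N, f S + f T ≥ f (S ∪ T) + f (S ∩ T))
    (p : ℝ) (hp0 : 0 ≤ p) (hp1 : p ≤ 1) :
    ∀ (ℓ : ℕ) (A : Fin ℓ → Finset N) (C : Finset N),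
    ∑ B : Fin ℓ → Finset N,
        (∏ i : Fin ℓ,
          if B i ⊆ A i then p ^ (B i).card * (1 - p) ^ ((A i).card - (B i).card)
          else 0) * f (Finset.univ.biUnion B ∪ C) ≥
      ∑ I : Finset (Fin ℓ), p ^ I.card * (1 - p) ^ (ℓ - I.card) * f (I.biUnion A ∪ C) := by
  intro ℓ
  induction ℓ with
  | zero =>
    intro A C
    rw [show (univ : Finset (Finset (Fin 0))) = {∅} from rfl]
    simp
  | succ n ih =>
    intro A C
    set w : Finset N → Finset N → ℝ :=
      fun Ai B => if B ⊆ Ai then p ^ B.card * (1 - p) ^ (Ai.card - B.card) else 0 with hw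
    have hwnn : ∀ Ai B, 0 ≤ w Ai B := by
      intro Ai B
      rw [hw]
      dsimp only
      split
      · exact mul_nonneg (pow_nonneg hp0 _) (pow_nonneg (by linarith) _)
      · exact le_refl 0
    -- rewrite LHS as double sum
    have hbi : ∀ (B₀ : Finset N) (B' : Fin n → Finset N),
        univ.biUnion (Fin.cons B₀ B') = B₀ ∪ univ.biUnion B' := by
      intro B₀ B'
      ext x
      simp only [Finset.mem_biUnion, Finset.mem_union, mem_univ, true_and]
      constructor
      · rintro ⟨i, hi⟩
        rcases Fin.eq_zero_or_eq_succ i with rfl | ⟨j, rfl⟩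
        · left; rwa [Fin.cons_zero] at hi
        · right; exact ⟨j, by rwa [Fin.cons_succ] at hi⟩
      · rintro (h | ⟨j, hj⟩)
        · exact ⟨0, by rwa [Fin.cons_zero]⟩
        · exact ⟨j.succ, by rwa [Fin.cons_succ]⟩
    have hLHS : ∑ B : Fin (n+1) → Finset N,
        (∏ i, w (A i) (B i)) * f (univ.biUnion B ∪ C)
        = ∑ B₀ : Finset N, ∑ B' : Fin n → Finset N,
            w (A 0) B₀ * ((∏ i : Fin n, w (A i.succ) (B' i)) *
              f (univ.biUnion B' ∪ (B₀ ∪ C))) := by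
      rw [← Equiv.sum_comp (Fin.consEquiv (fun _ : Fin (n+1) => Finset N))
        (fun B => (∏ i, w (A i) (B i)) * f (univ.biUnion B ∪ C)), Fintype.sum_prod_type]
      apply Finset.sum_congr rfl; intro B₀ _
      apply Finset.sum_congr rfl; intro B' _
      rw [show ((Fin.consEquiv fun _ : Fin (n+1) => Finset N) (B₀, B')) = Fin.cons B₀ B' from rfl]
      rw [Fin.prod_univ_succ, hbi]
      simp only [Fin.cons_zero, Fin.cons_succ]
      rw [Finset.union_assoc, Finset.union_left_comm]
      ring
    rw [hLHS]
    -- inner bound via ih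
    have step1 : ∀ B₀ : Finset N,
        ∑ B' : Fin n → Finset N, (∏ i : Fin n, w (A i.succ) (B' i)) *
            f (univ.biUnion B' ∪ (B₀ ∪ C))
          ≥ ∑ I : Finset (Fin n), p ^ I.card * (1 - p) ^ (n - I.card) *
              f (I.biUnion (fun i => A i.succ) ∪ (B₀ ∪ C)) :=
      fun B₀ => ih (fun i => A i.succ) (B₀ ∪ C)
    have step2 : ∑ B₀ : Finset N, ∑ B' : Fin n → Finset N,
        w (A 0) B₀ * ((∏ i : Fin n, w (A i.succ) (B' i)) * f (univ.biUnion B' ∪ (B₀ ∪ C)))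
        ≥ ∑ I : Finset (Fin n), p ^ I.card * (1 - p) ^ (n - I.card) *
            ((1 - p) * f (I.biUnion (fun i => A i.succ) ∪ C) +
             p * f (A 0 ∪ (I.biUnion (fun i => A i.succ) ∪ C))) := by
      calc ∑ B₀ : Finset N, ∑ B' : Fin n → Finset N,
            w (A 0) B₀ * ((∏ i : Fin n, w (A i.succ) (B' i)) * f (univ.biUnion B' ∪ (B₀ ∪ C)))
          ≥ ∑ B₀ : Finset N, w (A 0) B₀ * ∑ I : Finset (Fin n),
              p ^ I.card * (1 - p) ^ (n - I.card) *
                f (I.biUnion (fun i => A i.succ) ∪ (B₀ ∪ C)) := by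
            apply Finset.sum_le_sum
            intro B₀ _
            rw [← Finset.mul_sum]
            exact mul_le_mul_of_nonneg_left (step1 B₀) (hwnn _ _)
        _ = ∑ I : Finset (Fin n), p ^ I.card * (1 - p) ^ (n - I.card) *
              ∑ B₀ : Finset N, w (A 0) B₀ * f (B₀ ∪ (I.biUnion (fun i => A i.succ) ∪ C)) := by
            simp_rw [Finset.mul_sum]
            rw [Finset.sum_comm]
            apply Finset.sum_congr rfl; intro I _
            apply Finset.sum_congr rfl; intro B₀ _
            rw [Finset.union_left_comm]
            ring
        _ ≥ _ := by
            apply Finset.sum_le_sum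
            intro I _
            set D := I.biUnion (fun i => A i.succ) ∪ C with hD
            have hconv : ∑ B₀ : Finset N, w (A 0) B₀ * f (B₀ ∪ D)
                = ∑ B₀ ∈ (A 0).powerset,
                    p ^ B₀.card * (1 - p) ^ ((A 0).card - B₀.card) * f (B₀ ∪ D) := by
              rw [hw]
              dsimp only
              rw [show (A 0).powerset = univ.filter (fun B => B ⊆ A 0) from by
                ext B; simp [Finset.mem_powerset]]
              rw [Finset.sum_filter]
              apply Finset.sum_congr rfl; intro B₀ _
              split <;> simp
            have hkey := sample_key p hp0 hp1 (A 0) (fun B => f (B ∪ D))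
              (fun S => hnonneg _) ?_
            · rw [hconv]
              rw [Finset.empty_union] at hkey
              exact mul_le_mul_of_nonneg_left hkey
                (mul_nonneg (pow_nonneg hp0 _) (pow_nonneg (by linarith) _))
            · intro S T
              have h1 := hsub (S ∪ D) (T ∪ D)
              have hu : (S ∪ D) ∪ (T ∪ D) = (S ∪ T) ∪ D := by
                ext x; simp [Finset.mem_union]; tauto
              have hi : (S ∪ D) ∩ (T ∪ D) = (S ∩ T) ∪ D := by
                ext x; simp [Finset.mem_union, Finset.mem_inter]; tauto
              rw [hu, hi] at h1
              exact h1
    refine le_trans ?_ step2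
    -- now RHS equality
    have e : Fin n ↪ Fin (n+1) := ⟨Fin.succ, Fin.succ_injective n⟩
    have hRHS : ∑ J : Finset (Fin (n+1)), p ^ J.card * (1 - p) ^ (n + 1 - J.card) * f (J.biUnion A ∪ C)
        = ∑ I : Finset (Fin n), p ^ I.card * (1 - p) ^ (n - I.card) *
            ((1 - p) * f (I.biUnion (fun i => A i.succ) ∪ C) +
             p * f (A 0 ∪ (I.biUnion (fun i => A i.succ) ∪ C))) := by
      have huniv : (univ : Finset (Finset (Fin (n+1)))) = (univ : Finset (Fin (n+1))).powerset :=
        Finset.powerset_univ.symm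
      rw [huniv, Fin.univ_succ, Finset.cons_eq_insert,
        Finset.sum_powerset_insert (by simp)]
      rw [sum_powerset_map ⟨Fin.succ, Fin.succ_injective n⟩,
        sum_powerset_map ⟨Fin.succ, Fin.succ_injective n⟩, ← Finset.sum_add_distrib]
      apply Finset.sum_congr rfl
      intro I _
      have h0 : (0 : Fin (n+1)) ∉ I.map ⟨Fin.succ, Fin.succ_injective n⟩ := by
        simp [Finset.mem_map, Fin.succ_ne_zero]
      have hc1 : (I.map ⟨Fin.succ, Fin.succ_injective n⟩).card = I.card := Finset.card_map _
      have hc2 : (insert (0 : Fin (n+1)) (I.map ⟨Fin.succ, Fin.succ_injective n⟩)).card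
          = I.card + 1 := by rw [Finset.card_insert_of_notMem h0, hc1]
      have hbu : (I.map ⟨Fin.succ, Fin.succ_injective n⟩).biUnion A
          = I.biUnion (fun i => A i.succ) := by
        ext x
        simp only [Finset.mem_biUnion, Finset.mem_map, Function.Embedding.coeFn_mk]
        constructor
        · rintro ⟨j, ⟨i, hi, rfl⟩, hx⟩; exact ⟨i, hi, hx⟩
        · rintro ⟨i, hi, hx⟩; exact ⟨i.succ, ⟨i, hi, rfl⟩, hx⟩
      have hbu2 : (insert (0 : Fin (n+1)) (I.map ⟨Fin.succ, Fin.succ_injective n⟩)).biUnion A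
          = A 0 ∪ I.biUnion (fun i => A i.succ) := by
        rw [Finset.biUnion_insert, hbu]
      have hle : I.card ≤ n := by
        have := Finset.card_le_univ I
        simpa using this
      rw [hc1, hc2, hbu, hbu2]
      have he1 : n + 1 - I.card = (n - I.card) + 1 := by omega
      have he2 : n + 1 - (I.card + 1) = n - I.card := by omega
      rw [he1, he2, Finset.union_assoc]
      ring
    rw [hRHS]
end

/-- for a non-negative submodular `f`, sets `A 0, …, A (ℓ-1)` and `p ∈ [0,1]`,
if each `A i (p)` is an independent random subset of `A i` containing each element with
probability `p` independently, then
`E[f(∪_i A_i(p))] ≥ Σ_{I ⊆ [ℓ]} p^{|I|}(1−p)^{ℓ−|I|} · f(∪_{i∈I} A_i)`.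
The expectation on the left is written explicitly as a sum over the joint outcomes
`B : Fin ℓ → Finset N` (with `B i ⊆ A i`), weighted by their probabilities. -/
theorem expected_value_union_independent_samples {N : Type*} [Fintype N] [DecidableEq N]
    (f : Finset N → ℝ)
    (hnonneg : ∀ S : Finset N, 0 ≤ f S)
    (hsub : ∀ S T : Finset N, f S + f T ≥ f (S ∪ T) + f (S ∩ T))
    (ℓ : ℕ) (A : Fin ℓ → Finset N) (p : ℝ) (hp0 : 0 ≤ p) (hp1 : p ≤ 1) :
    ∑ B : Fin ℓ → Finset N,
        (∏ i : Fin ℓ,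
          if B i ⊆ A i then p ^ (B i).card * (1 - p) ^ ((A i).card - (B i).card)
          else 0) * f (Finset.univ.biUnion B) ≥
      ∑ I : Finset (Fin ℓ), p ^ I.card * (1 - p) ^ (ℓ - I.card) * f (I.biUnion A) := by
  simpa using main_aux f hnonneg hsub p hp0 hp1 ℓ A ∅
end

section
/- Let f : 2^N → ℝ≥0 be a non-negative submodular function on a ground set N of size n, and let 1 ≤ k ≤ n/2. Let OPT be a set of size k maximizing f among sets of size k, and let u* maximize f({u}) over u ∈ N. Then f(OPT) ≥ f({u*})/2. -/
open Finset

/-- for a non-negative submodular `f` on a ground set of size `n`, a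
cardinality parameter `1 ≤ k` with `2k ≤ n`, a maximizer `OPT` of `f` among size-`k`
sets, and an element `u⋆` maximizing `f` among singletons, `f(OPT) ≥ f({u⋆})/2`. -/
theorem opt_not_too_bad {N : Type*} [Fintype N] [DecidableEq N]
    (f : Finset N → ℝ)
    (hnonneg : ∀ S : Finset N, 0 ≤ f S)
    (hsub : ∀ S T : Finset N, f S + f T ≥ f (S ∪ T) + f (S ∩ T))
    (k : ℕ) (hk1 : 1 ≤ k) (hkn : 2 * k ≤ Fintype.card N)
    (OPT : Finset N) (hOPTcard : OPT.card = k)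
    (hOPTmax : ∀ S : Finset N, S.card = k → f S ≤ f OPT)
    (u : N) (hu : ∀ v : N, f {v} ≤ f {u}) :
    f OPT ≥ f {u} / 2 := by
  -- ground set minus u
  have hcard_erase : (Finset.univ.erase u).card = Fintype.card N - 1 := by
    simp [Finset.card_erase_of_mem]
  have h1 : k - 1 ≤ (Finset.univ.erase u).card := by omega
  obtain ⟨A, hAsub, hAcard⟩ := Finset.exists_subset_card_eq h1
  have h2 : k - 1 ≤ ((Finset.univ.erase u) \ A).card := by
    have := Finset.card_sdiff_of_subset hAsub
    omega
  obtain ⟨B, hBsub, hBcard⟩ := Finset.exists_subset_card_eq h2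
  have huA : u ∉ A := fun h => (Finset.mem_erase.mp (hAsub h)).1 rfl
  have huB : u ∉ B := fun h => (Finset.mem_erase.mp ((Finset.mem_sdiff.mp (hBsub h)).1)).1 rfl
  have hAB : Disjoint A B := by
    refine Finset.disjoint_left.mpr fun x hxA hxB => ?_
    exact (Finset.mem_sdiff.mp (hBsub hxB)).2 hxA
  have hcardAu : (insert u A).card = k := by
    rw [Finset.card_insert_of_notMem huA]; omega
  have hcardBu : (insert u B).card = k := by
    rw [Finset.card_insert_of_notMem huB]; omega
  have hinter : (insert u A) ∩ (insert u B) = {u} := by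
    ext x
    simp only [Finset.mem_inter, Finset.mem_insert, Finset.mem_singleton]
    constructor
    · rintro ⟨hx1 | hx1, hx2 | hx2⟩
      · exact hx1
      · exact hx1
      · exact hx2
      · exact absurd hx2 (Finset.disjoint_left.mp hAB hx1)
    · rintro rfl; exact ⟨Or.inl rfl, Or.inl rfl⟩
  have key := hsub (insert u A) (insert u B)
  rw [hinter] at key
  have h3 : f {u} ≤ f (insert u A) + f (insert u B) := by
    have := hnonneg ((insert u A) ∪ (insert u B))
    linarith
  have h4 := hOPTmax _ hcardAu
  have h5 := hOPTmax _ hcardBu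
  linarith
end

section
/- Let f : 2^N → ℝ be submodular with multilinear extension F, and let y¹, y² ∈ [0,1]^N be fixed vectors with y¹ ≤ y² coordinate-wise. Then the function r : [0,1] → ℝ defined by r(x) = F(y¹ + x·(y² − y¹)) is concave. -/
open Finset

lemma marg {N : Type*} [Fintype N] [DecidableEq N] (f : Finset N → ℝ) (w : N → Fin 4 → ℝ)
    (hw : ∀ u, ∑ i, w u i = 1) (σ : Fin 4 → Bool) :
    ∑ g : N → Fin 4, (∏ u, w u (g u)) * f (univ.filter fun u => σ (g u)) =
      multilinearExt f fun u => ∑ i ∈ univ.filter (fun i => σ i = true), w u i := by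
  classical
  unfold multilinearExt
  have h1 : ∀ u, 1 - ∑ i ∈ univ.filter (fun i => σ i = true), w u i
      = ∑ i ∈ univ.filter (fun i => ¬ (σ i = true)), w u i := by
    intro u
    have := Finset.sum_filter_add_sum_filter_not univ (fun i => σ i = true) (w u)
    rw [hw u] at this
    linarith
  have key : ∀ S : Finset N,
      (∏ u ∈ S, ∑ i ∈ univ.filter (fun i => σ i = true), w u i) *
        (∏ u ∈ Sᶜ, (1 - ∑ i ∈ univ.filter (fun i => σ i = true), w u i))
      = ∑ g ∈ univ.filter (fun g : N → Fin 4 => univ.filter (fun u => σ (g u)) = S),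
          ∏ u, w u (g u) := by
    intro S
    have hprod : (∏ u ∈ S, ∑ i ∈ univ.filter (fun i => σ i = true), w u i) *
        (∏ u ∈ Sᶜ, (1 - ∑ i ∈ univ.filter (fun i => σ i = true), w u i))
        = ∏ u, ∑ i ∈ (if u ∈ S then univ.filter (fun i : Fin 4 => σ i = true)
            else univ.filter (fun i => ¬ (σ i = true))), w u i := by
      simp only [h1]
      have hsp : ∀ u, (∑ i ∈ (if u ∈ S then univ.filter (fun i : Fin 4 => σ i = true)
          else univ.filter (fun i => ¬ (σ i = true))), w u i)
          = if u ∈ S then (∑ i ∈ univ.filter (fun i : Fin 4 => σ i = true), w u i)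
            else (∑ i ∈ univ.filter (fun i : Fin 4 => ¬ (σ i = true)), w u i) := by
        intro u; split <;> rfl
      simp only [hsp]
      rw [Finset.prod_ite]
      congr 1
      · congr 1; simp
      · congr 1; ext u; simp
    rw [hprod, Finset.prod_univ_sum]
    congr 1
    ext g
    simp only [Fintype.mem_piFinset, Finset.mem_filter, Finset.mem_univ, true_and]
    constructor
    · intro h
      ext u
      have := h u
      by_cases hu : u ∈ S <;> simp [hu] at this ⊢ <;> simp [Finset.mem_filter, this]
    · intro h u
      have := Finset.ext_iff.mp h u
      simp only [Finset.mem_filter, Finset.mem_univ, true_and] at this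
      by_cases hu : u ∈ S
      · simp only [hu, if_true, Finset.mem_filter, Finset.mem_univ, true_and]
        exact this.mpr hu
      · simp only [hu, if_false, Finset.mem_filter, Finset.mem_univ, true_and]
        intro hc; exact hu (this.mp hc)
  calc ∑ g : N → Fin 4, (∏ u, w u (g u)) * f (univ.filter fun u => σ (g u))
      = ∑ S : Finset N, ∑ g ∈ univ.filter
          (fun g : N → Fin 4 => univ.filter (fun u => σ (g u)) = S),
          (∏ u, w u (g u)) * f (univ.filter fun u => σ (g u)) :=
        (Finset.sum_fiberwise univ (fun g : N → Fin 4 => univ.filter fun u => σ (g u))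
          (fun g => (∏ u, w u (g u)) * f (univ.filter fun u => σ (g u)))).symm
    _ = ∑ S : Finset N, ∑ g ∈ univ.filter
          (fun g : N → Fin 4 => univ.filter (fun u => σ (g u)) = S),
          (∏ u, w u (g u)) * f S := by
        refine Finset.sum_congr rfl fun S _ => Finset.sum_congr rfl fun g hg => ?_
        rw [(Finset.mem_filter.mp hg).2]
    _ = _ := by
        refine Finset.sum_congr rfl fun S _ => ?_
        rw [← Finset.sum_mul, ← key S]

lemma wright {N : Type*} [Fintype N] [DecidableEq N] (f : Finset N → ℝ)
    (hsub : ∀ A B : Finset N, f A + f B ≥ f (A ∪ B) + f (A ∩ B))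
    (p q s : N → ℝ) (hp : ∀ u, 0 ≤ p u) (hq : ∀ u, 0 ≤ q u) (hs : ∀ u, 0 ≤ s u)
    (htot : ∀ u, p u + q u + s u ≤ 1) :
    multilinearExt f (fun u => p u + q u) + multilinearExt f (fun u => p u + s u)
      ≥ multilinearExt f (fun u => p u + q u + s u) + multilinearExt f p := by
  classical
  set w : N → Fin 4 → ℝ := fun u => ![p u, q u, s u, 1 - p u - q u - s u] with hwdef
  have hw : ∀ u, ∑ i, w u i = 1 := by
    intro u; rw [Fin.sum_univ_four]; simp only [hwdef]; simp; try ring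
  have hwnn : ∀ u i, 0 ≤ w u i := by
    intro u i
    fin_cases i <;> simp [hwdef] <;> [skip; skip; skip; skip] <;> first | exact hp u | exact hq u | exact hs u | linarith [htot u]
  have hsum : ∀ (σ : Fin 4 → Bool) (u : N),
      ∑ i ∈ univ.filter (fun i => σ i = true), w u i = ∑ i, if σ i then w u i else 0 := by
    intro σ u; rw [Finset.sum_filter]
  have m01 := marg f w hw ![true, true, false, false]
  have m02 := marg f w hw ![true, false, true, false]
  have m012 := marg f w hw ![true, true, true, false]
  have m0 := marg f w hw ![true, false, false, false]
  have e01 : (fun u => ∑ i ∈ univ.filter (fun i => ![true,true,false,false] i = true), w u i)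
      = fun u => p u + q u := by
    funext u; rw [hsum]; rw [Fin.sum_univ_four]; simp [hwdef]
  have e02 : (fun u => ∑ i ∈ univ.filter (fun i => ![true,false,true,false] i = true), w u i)
      = fun u => p u + s u := by
    funext u; rw [hsum]; rw [Fin.sum_univ_four]; simp [hwdef]
  have e012 : (fun u => ∑ i ∈ univ.filter (fun i => ![true,true,true,false] i = true), w u i)
      = fun u => p u + q u + s u := by
    funext u; rw [hsum]; rw [Fin.sum_univ_four]; simp [hwdef]; try ring
  have e0 : (fun u => ∑ i ∈ univ.filter (fun i => ![true,false,false,false] i = true), w u i)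
      = p := by
    funext u; rw [hsum]; rw [Fin.sum_univ_four]; simp [hwdef]
  rw [e01] at m01; rw [e02] at m02; rw [e012] at m012; rw [e0] at m0
  rw [← m01, ← m02, ← m012, ← m0, ← Finset.sum_add_distrib, ← Finset.sum_add_distrib]
  refine Finset.sum_le_sum fun g _ => ?_
  have hW : 0 ≤ ∏ u, w u (g u) := Finset.prod_nonneg fun u _ => hwnn u (g u)
  have hun : (univ.filter fun u => ![true,true,true,false] (g u) = true)
      = (univ.filter fun u => ![true,true,false,false] (g u) = true)
        ∪ (univ.filter fun u => ![true,false,true,false] (g u) = true) := by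
    ext u
    have : ∀ i : Fin 4, ![true,true,true,false] i = true ↔
        (![true,true,false,false] i = true ∨ ![true,false,true,false] i = true) := by decide
    simp [this (g u)]
  have hin : (univ.filter fun u => ![true,false,false,false] (g u) = true)
      = (univ.filter fun u => ![true,true,false,false] (g u) = true)
        ∩ (univ.filter fun u => ![true,false,true,false] (g u) = true) := by
    ext u
    have : ∀ i : Fin 4, ![true,false,false,false] i = true ↔
        (![true,true,false,false] i = true ∧ ![true,false,true,false] i = true) := by decide
    simp [this (g u)]
  have := hsub (univ.filter fun u => ![true,true,false,false] (g u) = true)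
    (univ.filter fun u => ![true,false,true,false] (g u) = true)
  rw [← hun, ← hin] at this
  nlinarith [this, hW]

/-- for a submodular `f` and fixed vectors `y¹ ≤ y²` in `[0,1]^N`, the
function `r(t) = F(y¹ + t·(y² − y¹))` is concave on `[0,1]`. -/
theorem segment_concave {N : Type*} [Fintype N] [DecidableEq N]
    (f : Finset N → ℝ)
    (hsub : ∀ A B : Finset N, f A + f B ≥ f (A ∪ B) + f (A ∩ B))
    (y1 y2 : N → ℝ)
    (hy1 : ∀ u, 0 ≤ y1 u ∧ y1 u ≤ 1) (hy2 : ∀ u, 0 ≤ y2 u ∧ y2 u ≤ 1)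
    (hle : ∀ u, y1 u ≤ y2 u) :
    ConcaveOn ℝ (Set.Icc (0 : ℝ) 1)
      (fun t => multilinearExt f (fun u => y1 u + t * (y2 u - y1 u))) := by
  classical
  set r : ℝ → ℝ := fun t => multilinearExt f (fun u => y1 u + t * (y2 u - y1 u)) with hr
  -- differentiability
  have hdiff : Differentiable ℝ r := by
    unfold r
    unfold multilinearExt
    apply Differentiable.fun_sum
    intro S _
    apply Differentiable.mul
    apply Differentiable.mul
    · exact Differentiable.fun_finsetProd fun u _ => by fun_prop
    · exact Differentiable.fun_finsetProd fun u _ => by fun_prop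
    · exact differentiable_const _
  -- Wright inequality for r
  have hWright : ∀ t1 t2 h : ℝ, 0 ≤ t1 → t1 ≤ t2 → 0 ≤ h → t2 + h ≤ 1 →
      r (t1 + h) + r t2 ≥ r (t2 + h) + r t1 := by
    intro t1 t2 h h0 h12 hh h21
    have key := wright f hsub (fun u => y1 u + t1 * (y2 u - y1 u))
      (fun u => h * (y2 u - y1 u)) (fun u => (t2 - t1) * (y2 u - y1 u))
      (fun u => by nlinarith [(hy1 u).1, hle u])
      (fun u => by nlinarith [hle u])
      (fun u => by nlinarith [hle u])
      (fun u => by nlinarith [(hy1 u).1, (hy1 u).2, (hy2 u).2, hle u])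
    have e1 : (fun u => (y1 u + t1 * (y2 u - y1 u)) + h * (y2 u - y1 u))
        = fun u => y1 u + (t1 + h) * (y2 u - y1 u) := by funext u; ring
    have e2 : (fun u => (y1 u + t1 * (y2 u - y1 u)) + (t2 - t1) * (y2 u - y1 u))
        = fun u => y1 u + t2 * (y2 u - y1 u) := by funext u; ring
    have e3 : (fun u => (y1 u + t1 * (y2 u - y1 u)) + h * (y2 u - y1 u)
          + (t2 - t1) * (y2 u - y1 u))
        = fun u => y1 u + (t2 + h) * (y2 u - y1 u) := by funext u; ring
    rw [e1, e2, e3] at key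
    exact key
  -- slope limit
  have hT : ∀ t : ℝ, Filter.Tendsto (fun h => (r (t + h) - r t) / h)
      (nhdsWithin 0 (Set.Ioi 0)) (nhds (deriv r t)) := by
    intro t
    have hd : HasDerivAt r (deriv r t) t := (hdiff t).hasDerivAt
    rw [hasDerivAt_iff_tendsto_slope] at hd
    have hmap : Filter.Tendsto (fun h : ℝ => t + h) (nhdsWithin 0 (Set.Ioi 0))
        (nhdsWithin t {t}ᶜ) := by
      apply tendsto_nhdsWithin_of_tendsto_nhds_of_eventually_within
      · have hcont : Filter.Tendsto (fun h : ℝ => t + h) (nhds 0) (nhds t) := by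
          have h0 : Continuous (fun h : ℝ => t + h) := by fun_prop
          simpa using h0.tendsto (0 : ℝ)
        exact hcont.mono_left nhdsWithin_le_nhds
      · filter_upwards [self_mem_nhdsWithin] with h hh
        simp only [Set.mem_compl_iff, Set.mem_singleton_iff]
        intro hc
        have hh0 : h = 0 := by
          have := congrArg (fun z => z - t) hc
          simpa using this
        rw [hh0] at hh
        exact lt_irrefl 0 (Set.mem_Ioi.mp hh)
    have := hd.comp hmap
    refine this.congr fun h => ?_
    simp [slope_def_field, Function.comp]
  -- antitone derivative
  have hanti : AntitoneOn (deriv r) (Set.Ioo (0:ℝ) 1) := by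
    intro a ha b hb hab
    refine le_of_tendsto_of_tendsto (hT b) (hT a) ?_
    have h1 : ∀ᶠ h in nhdsWithin (0:ℝ) (Set.Ioi 0), h < 1 - b :=
      eventually_nhdsWithin_of_eventually_nhds (eventually_lt_nhds (by linarith [hb.2]))
    filter_upwards [h1, self_mem_nhdsWithin] with h hh1 hh2
    have hh2' : (0:ℝ) < h := hh2
    have hw := hWright a b h (le_of_lt ha.1) hab (le_of_lt hh2') (by linarith)
    have : r (b + h) - r b ≤ r (a + h) - r a := by linarith
    exact div_le_div_of_nonneg_right this hh2'.le
  exact AntitoneOn.concaveOn_of_deriv (convex_Icc 0 1) hdiff.continuous.continuousOn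
    (hdiff.differentiableOn) (by rwa [interior_Icc])
end

section
/- Consider the deterministic two-sided greedy on a symmetric non-negative submodular f: X_0 = ∅, Y_0 = N; at step i, with a_i = f(X_{i−1} + u_i) − f(X_{i−1}) and b_i = f(Y_{i−1} − u_i) − f(Y_{i−1}), set X_i = X_{i−1} + u_i and Y_i = Y_{i−1} if a_i ≥ b_i, and X_i = X_{i−1}, Y_i = Y_{i−1} − u_i otherwise. Define OPT_i = (OPT ∪ X_i) ∩ Y_i and ŌPT_i = (ŌPT ∪ X_i) ∩ Y_i where ŌPT = N \ OPT. Then for every 1 ≤ i ≤ n: [f(OPT_{i−1}) − f(OPT_i)] + [f(ŌPT_{i−1}) − f(ŌPT_i)] ≤ [f(X_i) − f(X_{i−1})] + [f(Y_i) − f(Y_{i−1})]. -/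
open Finset

private lemma marginal_aux {n : ℕ} (f : Finset (Fin n) → ℝ)
    (hsub : ∀ A B : Finset (Fin n), f A + f B ≥ f (A ∪ B) + f (A ∩ B))
    {S T : Finset (Fin n)} {u : Fin n} (hST : S ⊆ T) (huT : u ∉ T) :
    f (insert u S) - f S ≥ f (insert u T) - f T := by
  have h := hsub (insert u S) T
  have h1 : insert u S ∪ T = insert u T := by
    rw [insert_union, union_eq_right.mpr hST]
  have h2 : insert u S ∩ T = S := by
    rw [insert_inter_of_notMem huT, inter_eq_left.mpr hST]
  rw [h1, h2] at h; linarith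

private lemma greedy_invariant {n : ℕ} (f : Finset (Fin n) → ℝ)
    (X Y : ℕ → Finset (Fin n))
    (hX0 : X 0 = ∅) (hY0 : Y 0 = Finset.univ)
    (hstep : ∀ i : Fin n,
      if f (insert i (X i)) - f (X i) ≥ f ((Y i).erase i) - f (Y i)
      then X (i + 1) = insert i (X i) ∧ Y (i + 1) = Y i
      else X (i + 1) = X i ∧ Y (i + 1) = (Y i).erase i) :
    ∀ k : ℕ, k ≤ n →
      (X k ⊆ Y k ∧ ∀ j : Fin n, k ≤ (j : ℕ) → j ∉ X k ∧ j ∈ Y k) := by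
  intro k
  induction k with
  | zero => intro _; rw [hX0, hY0]; exact ⟨empty_subset _, fun j _ => ⟨notMem_empty j, mem_univ j⟩⟩
  | succ k ih =>
    intro hk
    obtain ⟨hXY, hmem⟩ := ih (Nat.le_of_succ_le hk)
    have hkn : k < n := hk
    set u : Fin n := ⟨k, hkn⟩ with hu
    have huk : (u : ℕ) = k := rfl
    have hs := hstep u
    obtain ⟨huX, huY⟩ := hmem u (le_of_eq huk.symm)
    by_cases hc : f (insert u (X u)) - f (X u) ≥ f ((Y u).erase u) - f (Y u)
    · rw [if_pos hc] at hs
      obtain ⟨hX1, hY1⟩ := hs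
      rw [huk] at hX1 hY1
      constructor
      · rw [hX1, hY1]
        exact insert_subset huY hXY
      · intro j hj
        have hjk : k ≤ (j : ℕ) := Nat.le_of_succ_le hj
        obtain ⟨hjX, hjY⟩ := hmem j hjk
        rw [hX1, hY1]
        refine ⟨?_, hjY⟩
        simp only [mem_insert]
        rintro (h | h)
        · apply absurd (congrArg (Fin.val) h)
          omega
        · exact hjX h
    · rw [if_neg hc] at hs
      obtain ⟨hX1, hY1⟩ := hs
      rw [huk] at hX1 hY1
      constructor
      · rw [hX1, hY1]
        intro x hx
        exact mem_erase.mpr ⟨fun h => huX (h ▸ hx), hXY hx⟩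
      · intro j hj
        have hjk : k ≤ (j : ℕ) := Nat.le_of_succ_le hj
        obtain ⟨hjX, hjY⟩ := hmem j hjk
        rw [hX1, hY1]
        refine ⟨hjX, mem_erase.mpr ⟨?_, hjY⟩⟩
        intro h
        apply absurd (congrArg (Fin.val) h)
        omega

/-- the key inequality for the deterministic two-sided greedy on a
symmetric non-negative submodular function. The ground set is `Fin n`, with element
`i` processed at step `i + 1`. At each step, with `a = f(X_{i-1}+u_i)−f(X_{i-1})` and
`b = f(Y_{i-1}−u_i)−f(Y_{i-1})`, the algorithm adds `u_i` to `X` if `a ≥ b` and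
otherwise removes it from `Y`. With `OPT_j = (OPT ∪ X_j) ∩ Y_j` and
`ŌPT_j = (ŌPT ∪ X_j) ∩ Y_j`, the decrease of `f(OPT_j) + f(ŌPT_j)` at every step is at
most the increase of `f(X_j) + f(Y_j)`. -/
theorem two_sided_greedy_loss_gain_bound (n : ℕ)
    (f : Finset (Fin n) → ℝ)
    (hnonneg : ∀ S, 0 ≤ f S)
    (hsym : ∀ S : Finset (Fin n), f S = f Sᶜ)
    (hsub : ∀ A B : Finset (Fin n), f A + f B ≥ f (A ∪ B) + f (A ∩ B))
    (OPT : Finset (Fin n))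
    (X Y : ℕ → Finset (Fin n))
    (hX0 : X 0 = ∅) (hY0 : Y 0 = Finset.univ)
    (hstep : ∀ i : Fin n,
      if f (insert i (X i)) - f (X i) ≥ f ((Y i).erase i) - f (Y i)
      then X (i + 1) = insert i (X i) ∧ Y (i + 1) = Y i
      else X (i + 1) = X i ∧ Y (i + 1) = (Y i).erase i) :
    ∀ i : Fin n,
      (f ((OPT ∪ X i) ∩ Y i) - f ((OPT ∪ X (i + 1)) ∩ Y (i + 1))) +
        (f ((OPTᶜ ∪ X i) ∩ Y i) - f ((OPTᶜ ∪ X (i + 1)) ∩ Y (i + 1))) ≤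
      (f (X (i + 1)) - f (X i)) + (f (Y (i + 1)) - f (Y i)) := by
  intro i
  obtain ⟨hXY, hmem⟩ := greedy_invariant f X Y hX0 hY0 hstep i (le_of_lt i.isLt)
  obtain ⟨hiX, hiY⟩ := hmem i le_rfl
  have hs := hstep i
  -- basic subset facts
  have hXO : X (i : ℕ) ⊆ (OPT ∪ X i) ∩ Y i :=
    fun x hx => mem_inter.mpr ⟨mem_union_right _ hx, hXY hx⟩
  have hXObar : X (i : ℕ) ⊆ (OPTᶜ ∪ X i) ∩ Y i :=
    fun x hx => mem_inter.mpr ⟨mem_union_right _ hx, hXY hx⟩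
  by_cases hc : f (insert i (X i)) - f (X i) ≥ f ((Y i).erase i) - f (Y i)
  · rw [if_pos hc] at hs
    obtain ⟨hX1, hY1⟩ := hs
    rw [hX1, hY1]
    by_cases hO : i ∈ OPT
    · -- O unchanged, Obar gains i
      have eO : OPT ∪ insert i (X i) = OPT ∪ X i := by
        rw [union_insert, insert_eq_self.mpr (mem_union_left _ hO)]
      have iObar : i ∉ (OPTᶜ ∪ X i) ∩ Y i := by
        simp only [mem_inter, mem_union, mem_compl]
        tauto
      have eObar : (OPTᶜ ∪ insert i (X i)) ∩ Y i = insert i ((OPTᶜ ∪ X i) ∩ Y i) := by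
        rw [union_insert, insert_inter_of_mem hiY]
      have hsubE : (OPTᶜ ∪ X i) ∩ Y i ⊆ (Y (i : ℕ)).erase i :=
        subset_erase.mpr ⟨inter_subset_right, iObar⟩
      have hm := marginal_aux f hsub hsubE (notMem_erase i _)
      rw [insert_erase hiY] at hm
      rw [eO, eObar]
      linarith
    · -- Obar unchanged, O gains i
      have hOc : i ∈ OPTᶜ := mem_compl.mpr hO
      have eObar : OPTᶜ ∪ insert i (X i) = OPTᶜ ∪ X i := by
        rw [union_insert, insert_eq_self.mpr (mem_union_left _ hOc)]
      have iO : i ∉ (OPT ∪ X i) ∩ Y i := by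
        simp only [mem_inter, mem_union]
        tauto
      have eO : (OPT ∪ insert i (X i)) ∩ Y i = insert i ((OPT ∪ X i) ∩ Y i) := by
        rw [union_insert, insert_inter_of_mem hiY]
      have hsubE : (OPT ∪ X i) ∩ Y i ⊆ (Y (i : ℕ)).erase i :=
        subset_erase.mpr ⟨inter_subset_right, iO⟩
      have hm := marginal_aux f hsub hsubE (notMem_erase i _)
      rw [insert_erase hiY] at hm
      rw [eO, eObar]
      linarith
  · rw [if_neg hc] at hs
    obtain ⟨hX1, hY1⟩ := hs
    rw [hX1, hY1]
    push_neg at hc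
    by_cases hO : i ∈ OPT
    · -- O loses i, Obar unchanged
      have iO : i ∈ (OPT ∪ X i) ∩ Y i :=
        mem_inter.mpr ⟨mem_union_left _ hO, hiY⟩
      have eO : (OPT ∪ X i) ∩ (Y (i : ℕ)).erase i = ((OPT ∪ X i) ∩ Y i).erase i := by
        ext x; simp only [mem_inter, mem_erase]; tauto
      have iObar : i ∉ OPTᶜ ∪ X i := by
        simp only [mem_union, mem_compl]; tauto
      have eObar : (OPTᶜ ∪ X i) ∩ (Y (i : ℕ)).erase i = (OPTᶜ ∪ X i) ∩ Y i := by
        ext x; simp only [mem_inter, mem_erase]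
        exact ⟨fun h => ⟨h.1, h.2.2⟩, fun h => ⟨h.1, fun hx => iObar (hx ▸ h.1), h.2⟩⟩
      have hsubE : X (i : ℕ) ⊆ ((OPT ∪ X i) ∩ Y i).erase i :=
        subset_erase.mpr ⟨hXO, hiX⟩
      have hm := marginal_aux f hsub hsubE (notMem_erase i _)
      rw [insert_erase iO] at hm
      rw [eO, eObar]
      linarith
    · -- Obar loses i, O unchanged
      have hOc : i ∈ OPTᶜ := mem_compl.mpr hO
      have iObar : i ∈ (OPTᶜ ∪ X i) ∩ Y i :=
        mem_inter.mpr ⟨mem_union_left _ hOc, hiY⟩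
      have eObar : (OPTᶜ ∪ X i) ∩ (Y (i : ℕ)).erase i = ((OPTᶜ ∪ X i) ∩ Y i).erase i := by
        ext x; simp only [mem_inter, mem_erase]; tauto
      have iO : i ∉ OPT ∪ X i := by
        simp only [mem_union]; tauto
      have eO : (OPT ∪ X i) ∩ (Y (i : ℕ)).erase i = (OPT ∪ X i) ∩ Y i := by
        ext x; simp only [mem_inter, mem_erase]
        exact ⟨fun h => ⟨h.1, h.2.2⟩, fun h => ⟨h.1, fun hx => iO (hx ▸ h.1), h.2⟩⟩
      have hsubE : X (i : ℕ) ⊆ ((OPTᶜ ∪ X i) ∩ Y i).erase i :=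
        subset_erase.mpr ⟨hXObar, hiX⟩
      have hm := marginal_aux f hsub hsubE (notMem_erase i _)
      rw [insert_erase iObar] at hm
      rw [eO, eObar]
      linarith
end

section
/- Let f : 2^N → ℝ≥0 be a non-negative symmetric submodular function and let X_n be the output of the deterministic two-sided greedy algorithm (starting with X_0 = ∅, Y_0 = N, and at each step adding u_i to X or removing it from Y according to which marginal gain a_i = f(X_{i−1}+u_i)−f(X_{i−1}) or b_i = f(Y_{i−1}−u_i)−f(Y_{i−1}) is larger). Then f(X_n) ≥ (1/2)·max_{S ⊆ N} f(S). -/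
open Finset

lemma ue_union {α : Type*} [DecidableEq α] {A B : Finset α} {u : α}
    (hAB : A ⊆ B) (huB : u ∈ B) : insert u A ∪ B.erase u = B := by
  ext x
  by_cases hx : x = u
  · subst hx; simp [huB]
  · simp only [mem_union, mem_insert, mem_erase, hx, false_or, ne_eq,
      not_false_eq_true, true_and]
    exact ⟨fun h => h.elim (fun h => hAB h) id, Or.inr⟩

lemma ue_inter {α : Type*} [DecidableEq α] {A B : Finset α} {u : α}
    (hAB : A ⊆ B) (huA : u ∉ A) : insert u A ∩ B.erase u = A := by
  ext x
  by_cases hx : x = u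
  · subst hx; simp [huA]
  · simp only [mem_inter, mem_insert, mem_erase, hx, false_or, ne_eq,
      not_false_eq_true, true_and]
    exact ⟨And.left, fun h => ⟨h, hAB h⟩⟩

lemma exch {n : ℕ} (f : Finset (Fin n) → ℝ)
    (hsub : ∀ A B : Finset (Fin n), f A + f B ≥ f (A ∪ B) + f (A ∩ B))
    {A B : Finset (Fin n)} {u : Fin n} (hAB : A ⊆ B) (huA : u ∉ A) (huB : u ∈ B) :
    f A + f B ≤ f (insert u A) + f (B.erase u) := by
  have h := hsub (insert u A) (B.erase u)
  rw [ue_union hAB huB, ue_inter hAB huA] at h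
  linarith

/-- the deterministic two-sided greedy is a `1/2`-approximation for
unconstrained maximization of a non-negative symmetric submodular function:
`f(X_n) ≥ (1/2)·max_{S ⊆ N} f(S)`. -/
theorem two_sided_greedy_half_approximation (n : ℕ)
    (f : Finset (Fin n) → ℝ)
    (hnonneg : ∀ S, 0 ≤ f S)
    (hsym : ∀ S : Finset (Fin n), f S = f Sᶜ)
    (hsub : ∀ A B : Finset (Fin n), f A + f B ≥ f (A ∪ B) + f (A ∩ B))
    (X Y : ℕ → Finset (Fin n))
    (hX0 : X 0 = ∅) (hY0 : Y 0 = Finset.univ)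
    (hstep : ∀ i : Fin n,
      if f (insert i (X i)) - f (X i) ≥ f ((Y i).erase i) - f (Y i)
      then X (i + 1) = insert i (X i) ∧ Y (i + 1) = Y i
      else X (i + 1) = X i ∧ Y (i + 1) = (Y i).erase i) :
    ∀ S : Finset (Fin n), f (X n) ≥ f S / 2 := by
  -- Invariant: elements ≥ k are outside X k and inside Y k; elements < k are decided.
  have inv : ∀ k, k ≤ n → ∀ j : Fin n,
      (k ≤ (j : ℕ) → j ∉ X k ∧ j ∈ Y k) ∧ ((j : ℕ) < k → (j ∈ X k ↔ j ∈ Y k)) := by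
    intro k
    induction k with
    | zero => intro _ j; simp [hX0, hY0]
    | succ m ih =>
      intro hm j
      have hmn : m < n := hm
      have ihj := ih (Nat.le_of_lt hmn) j
      have hs := hstep ⟨m, hmn⟩
      simp only [Fin.val_mk] at hs
      split_ifs at hs with hc <;> obtain ⟨h1, h2⟩ := hs <;> rw [h1, h2] <;> constructor
      · intro hj
        obtain ⟨hx, hy⟩ := ihj.1 (by omega)
        refine ⟨?_, hy⟩
        simp only [mem_insert, Fin.ext_iff, Fin.val_mk]
        push_neg
        exact ⟨by omega, hx⟩
      · intro hj
        by_cases hjm : (j : ℕ) < m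
        · have h := ihj.2 hjm
          simp only [mem_insert, Fin.ext_iff, Fin.val_mk, (show (j : ℕ) ≠ m by omega),
            false_or]
          exact h
        · have hje : j = ⟨m, hmn⟩ := Fin.ext (show (j : ℕ) = m by omega)
          have hy := (ihj.1 (by omega)).2
          subst hje; simp [hy]
      · intro hj
        obtain ⟨hx, hy⟩ := ihj.1 (by omega)
        refine ⟨hx, ?_⟩
        simp only [mem_erase, Fin.ext_iff, Fin.val_mk, ne_eq]
        exact ⟨by omega, hy⟩
      · intro hj
        by_cases hjm : (j : ℕ) < m
        · have h := ihj.2 hjm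
          simp only [mem_erase, Fin.ext_iff, Fin.val_mk, ne_eq, (show (j : ℕ) ≠ m by omega),
            not_false_eq_true, true_and]
          exact h
        · have hje : j = ⟨m, hmn⟩ := Fin.ext (show (j : ℕ) = m by omega)
          have hx := (ihj.1 (by omega)).1
          subst hje; simp [hx]
  have hXYsub : ∀ k, k ≤ n → X k ⊆ Y k := by
    intro k hk j hj
    have h := inv k hk j
    by_cases hjk : k ≤ (j : ℕ)
    · exact absurd hj (h.1 hjk).1
    · exact (h.2 (by omega)).mp hj
  have hXn : X n = Y n := by
    ext j
    exact (inv n le_rfl j).2 j.isLt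
  intro S
  -- the key per-step bound
  have key : ∀ k, ∀ hk : k < n,
      f ((S ∪ X k) ∩ Y k) + f ((Sᶜ ∪ X k) ∩ Y k)
        - (f ((S ∪ X (k + 1)) ∩ Y (k + 1)) + f ((Sᶜ ∪ X (k + 1)) ∩ Y (k + 1)))
      ≤ f (X (k + 1)) + f (Y (k + 1)) - (f (X k) + f (Y k)) := by
    intro k hk
    set u : Fin n := ⟨k, hk⟩ with hu
    obtain ⟨huX, huY⟩ := (inv k (le_of_lt hk) u).1 (le_refl k)
    have hXY := hXYsub k (le_of_lt hk)
    have hs := hstep u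
    change (if f (insert u (X k)) - f (X k) ≥ f ((Y k).erase u) - f (Y k) then X (k + 1) = insert u (X k) ∧ Y (k + 1) = Y k else X (k + 1) = X k ∧ Y (k + 1) = (Y k).erase u) at hs
    set O : Finset (Fin n) := (S ∪ X k) ∩ Y k with hO
    set O' : Finset (Fin n) := (Sᶜ ∪ X k) ∩ Y k with hO'
    have hOB : O ⊆ Y k := inter_subset_right
    have hO'B : O' ⊆ Y k := inter_subset_right
    have hAO : X k ⊆ O := subset_inter subset_union_right hXY
    have hAO' : X k ⊆ O' := subset_inter subset_union_right hXY
    have huO : u ∈ O ↔ u ∈ S := by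
      simp [hO, mem_inter, mem_union, huY, huX]
    have huO' : u ∈ O' ↔ u ∉ S := by
      simp [hO', mem_inter, mem_union, huY, huX]
    split_ifs at hs with hc
    · obtain ⟨h1, h2⟩ := hs
      rw [h1, h2]
      have e1 : (S ∪ insert u (X k)) ∩ Y k = insert u O := by
        rw [Finset.union_insert, Finset.insert_inter_of_mem huY]
      have e2 : (Sᶜ ∪ insert u (X k)) ∩ Y k = insert u O' := by
        rw [Finset.union_insert, Finset.insert_inter_of_mem huY]
      rw [e1, e2]
      by_cases hS : u ∈ S
      · rw [Finset.insert_eq_self.mpr (huO.mpr hS)]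
        have hex := exch f hsub hO'B (fun h => (huO'.mp h) hS) huY
        linarith
      · rw [Finset.insert_eq_self.mpr (huO'.mpr hS)]
        have hex := exch f hsub hOB (fun h => hS (huO.mp h)) huY
        linarith
    · obtain ⟨h1, h2⟩ := hs
      rw [h1, h2]
      have e1 : (S ∪ X k) ∩ (Y k).erase u = O.erase u := by
        rw [hO, Finset.inter_erase]
      have e2 : (Sᶜ ∪ X k) ∩ (Y k).erase u = O'.erase u := by
        rw [hO', Finset.inter_erase]
      rw [e1, e2]
      have hcb := not_le.mp hc
      by_cases hS : u ∈ S
      · rw [Finset.erase_eq_self.mpr (fun h => (huO'.mp h) hS)]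
        have hex := exch f hsub hAO huX (huO.mpr hS)
        linarith
      · rw [Finset.erase_eq_self.mpr (fun h => hS (huO.mp h))]
        have hex := exch f hsub hAO' huX (huO'.mpr hS)
        linarith
  -- telescoping
  have tel : ∀ k, k ≤ n →
      f ((S ∪ X 0) ∩ Y 0) + f ((Sᶜ ∪ X 0) ∩ Y 0)
        - (f ((S ∪ X k) ∩ Y k) + f ((Sᶜ ∪ X k) ∩ Y k))
      ≤ f (X k) + f (Y k) - (f (X 0) + f (Y 0)) := by
    intro k
    induction k with
    | zero => intro _; simp
    | succ m ih =>
      intro hm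
      have h1 := ih (by omega)
      have h2 := key m (by omega)
      linarith
  have hT := tel n le_rfl
  rw [hX0, hY0] at hT
  simp only [Finset.union_empty, Finset.inter_univ] at hT
  have e3 : (S ∪ X n) ∩ Y n = X n := by
    rw [← hXn]; exact inter_eq_right.mpr subset_union_right
  have e4 : (Sᶜ ∪ X n) ∩ Y n = X n := by
    rw [← hXn]; exact inter_eq_right.mpr subset_union_right
  rw [e3, e4, ← hXn] at hT
  have hsS := hsym S
  have h1 := hnonneg (∅ : Finset (Fin n))
  have h2 := hnonneg (Finset.univ : Finset (Fin n))
  linarith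
end

section
/- Let f : 2^N → ℝ≥0 be a non-negative submodular function on a ground set of k items (|N| = k), and let OPT_1, …, OPT_k be a partition of N. If each element of N is assigned independently and uniformly at random to one of k players (yielding random sets S_1, …, S_k partitioning N), then E[Σ_{i=1}^k f(S_i)] ≥ [1 − (1 − 1/k)^{k−1}] · Σ_{i=1}^k f(OPT_i). -/
open Finset

section AuxRA
set_option linter.unusedSectionVars false
set_option linter.unusedVariables false
variable {N : Type*} [Fintype N] [DecidableEq N]

private lemma telescope_aux (h : ℕ → ℝ) (a : ℕ) : ∀ b, a ≤ b →
    ∑ j ∈ Finset.Ico a b, (h j - h (j + 1)) = h a - h b := by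
  intro b
  induction b with
  | zero => intro hab; have : a = 0 := Nat.le_zero.mp hab; subst this; simp
  | succ b ih =>
    intro hab
    rcases Nat.lt_or_ge a (b + 1) with hb | hb
    · have hab' : a ≤ b := Nat.lt_succ_iff.mp hb
      rw [Finset.sum_Ico_succ_top hab', ih hab']; ring
    · have : a = b + 1 := le_antisymm hab hb
      subst this; simp

private lemma ins_sum (m : ℕ) (h : Finset N → ℝ) :
    ∑ W ∈ powersetCard m (univ : Finset N), ∑ x ∈ univ \ W, h (insert x W)
      = ((m : ℝ) + 1) * ∑ V ∈ powersetCard (m + 1) (univ : Finset N), h V := by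
  rw [Finset.sum_sigma']
  have key : ∑ p ∈ (powersetCard m (univ : Finset N)).sigma (fun W => univ \ W),
        h (insert p.2 p.1)
      = ∑ p ∈ (powersetCard (m + 1) (univ : Finset N)).sigma (fun V => (V : Finset N)),
        h p.1 := by
    refine Finset.sum_nbij' (fun p => ⟨insert p.2 p.1, p.2⟩)
      (fun p => ⟨p.1.erase p.2, p.2⟩) ?_ ?_ ?_ ?_ ?_
    · rintro ⟨W, x⟩ hp
      simp only [Finset.mem_sigma, Finset.mem_powersetCard, Finset.mem_sdiff] at hp ⊢
      obtain ⟨⟨-, hWcard⟩, -, hx⟩ := hp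
      exact ⟨⟨Finset.subset_univ _, by rw [Finset.card_insert_of_notMem hx, hWcard]⟩,
        Finset.mem_insert_self _ _⟩
    · rintro ⟨V, x⟩ hp
      simp only [Finset.mem_sigma, Finset.mem_powersetCard] at hp ⊢
      obtain ⟨⟨-, hVcard⟩, hx⟩ := hp
      exact ⟨⟨Finset.subset_univ _, by simp [Finset.card_erase_of_mem hx, hVcard]⟩,
        Finset.mem_sdiff.mpr ⟨Finset.mem_univ _, Finset.notMem_erase _ _⟩⟩
    · rintro ⟨W, x⟩ hp
      simp only [Finset.mem_sigma, Finset.mem_sdiff] at hp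
      simp [Finset.erase_insert hp.2.2]
    · rintro ⟨V, x⟩ hp
      simp only [Finset.mem_sigma] at hp
      simp [Finset.insert_erase hp.2]
    · rintro ⟨W, x⟩ _; rfl
  rw [key, Finset.sum_sigma, Finset.mul_sum]
  refine Finset.sum_congr rfl fun V hV => ?_
  simp only [Finset.sum_const, (Finset.mem_powersetCard.mp hV).2, nsmul_eq_mul]
  push_cast
  ring


private lemma submod_pair (f : Finset N → ℝ)
    (hsub : ∀ A B : Finset N, f A + f B ≥ f (A ∪ B) + f (A ∩ B))
    {W : Finset N} {x y : N} (hx : x ∉ W) (hy : y ∉ W) (hxy : x ≠ y) :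
    f (insert y (insert x W)) + f W ≤ f (insert x W) + f (insert y W) := by
  have h := hsub (insert x W) (insert y W)
  have hu : insert x W ∪ insert y W = insert y (insert x W) := by
    ext u; simp only [Finset.mem_union, Finset.mem_insert]; tauto
  have hi : insert x W ∩ insert y W = W := by
    ext u
    simp only [Finset.mem_inter, Finset.mem_insert]
    constructor
    · rintro ⟨hx' | hu, hy' | hu⟩
      · exact absurd (hx' ▸ hy' ▸ rfl : x = y) hxy
      all_goals exact hu
    · exact fun hu => ⟨Or.inr hu, Or.inr hu⟩
  rw [hu, hi] at h
  linarith

private lemma concave_G (f : Finset N → ℝ)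
    (hsub : ∀ A B : Finset N, f A + f B ≥ f (A ∪ B) + f (A ∩ B))
    (a b : ℕ) (hab : a + b + 2 = Fintype.card N) :
    ((a : ℝ) + 1) * ((a : ℝ) + 2) * ∑ S ∈ powersetCard (a + 2) (univ : Finset N), f S
      + ((b : ℝ) + 2) * ((b : ℝ) + 1) * ∑ S ∈ powersetCard a (univ : Finset N), f S
      ≤ 2 * (((a : ℝ) + 1) * ((b : ℝ) + 1))
          * ∑ S ∈ powersetCard (a + 1) (univ : Finset N), f S := by
  have hcardW : ∀ W ∈ powersetCard a (univ : Finset N), (univ \ W).card = b + 2 := by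
    intro W hW
    rw [Finset.card_sdiff_of_subset (Finset.subset_univ W), Finset.card_univ, ← hab,
      (Finset.mem_powersetCard.mp hW).2]
    omega
  -- the nonnegative triple sum
  have hT : 0 ≤ ∑ W ∈ powersetCard a (univ : Finset N), ∑ x ∈ univ \ W,
      ∑ y ∈ (univ \ W).erase x,
        (f (insert x W) + f (insert y W) - f (insert y (insert x W)) - f W) := by
    refine Finset.sum_nonneg fun W _ => Finset.sum_nonneg fun x hx =>
      Finset.sum_nonneg fun y hy => ?_
    rw [Finset.mem_sdiff] at hx
    have hy' := Finset.mem_erase.mp hy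
    have hyW := Finset.mem_sdiff.mp hy'.2
    have := submod_pair f hsub hx.2 hyW.2 (fun h => hy'.1 (h ▸ rfl))
    linarith
  -- rewrite the triple sum
  have key : ∑ W ∈ powersetCard a (univ : Finset N), ∑ x ∈ univ \ W,
      ∑ y ∈ (univ \ W).erase x,
        (f (insert x W) + f (insert y W) - f (insert y (insert x W)) - f W)
      = 2 * (((a : ℝ) + 1) * ((b : ℝ) + 1))
          * ∑ S ∈ powersetCard (a + 1) (univ : Finset N), f S
        - ((a : ℝ) + 1) * ((a : ℝ) + 2) * ∑ S ∈ powersetCard (a + 2) (univ : Finset N), f S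
        - ((b : ℝ) + 2) * ((b : ℝ) + 1) * ∑ S ∈ powersetCard a (univ : Finset N), f S := by
    have PW : ∀ W ∈ powersetCard a (univ : Finset N), ∑ x ∈ univ \ W,
        ∑ y ∈ (univ \ W).erase x,
          (f (insert x W) + f (insert y W) - f (insert y (insert x W)) - f W)
        = 2 * ((b : ℝ) + 1) * (∑ x ∈ univ \ W, f (insert x W))
          - (∑ x ∈ univ \ W, ∑ y ∈ univ \ insert x W, f (insert y (insert x W)))
          - ((b : ℝ) + 2) * ((b : ℝ) + 1) * f W := by
      intro W hW
      have hcW := hcardW W hW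
      have e1 : ∀ x ∈ univ \ W, ∑ y ∈ (univ \ W).erase x,
          (f (insert x W) + f (insert y W) - f (insert y (insert x W)) - f W)
          = ((b : ℝ) + 1) * f (insert x W)
            + ((∑ y ∈ univ \ W, f (insert y W)) - f (insert x W))
            - (∑ y ∈ univ \ insert x W, f (insert y (insert x W)))
            - ((b : ℝ) + 1) * f W := by
        intro x hx
        have hce : ((univ \ W).erase x).card = b + 1 := by
          rw [Finset.card_erase_of_mem hx, hcW]
          omega

        simp only [Finset.sum_add_distrib, Finset.sum_sub_distrib]
        rw [Finset.sum_const, Finset.sum_const, hce,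
          Finset.sum_erase_eq_sub hx, ← Finset.sdiff_insert]
        push_cast [nsmul_eq_mul]
        ring
      rw [Finset.sum_congr rfl e1]
      simp only [Finset.sum_add_distrib, Finset.sum_sub_distrib, ← Finset.mul_sum,
        Finset.sum_const, hcW, nsmul_eq_mul]
      push_cast
      ring
    rw [Finset.sum_congr rfl PW]
    simp only [Finset.sum_sub_distrib]
    rw [← Finset.mul_sum, ← Finset.mul_sum, ins_sum a (fun V => f V)]
    have e3 : ∑ W ∈ powersetCard a (univ : Finset N), ∑ x ∈ univ \ W,
        ∑ y ∈ univ \ insert x W, f (insert y (insert x W))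
        = ((a : ℝ) + 1) * (((a : ℝ) + 1 + 1)
            * ∑ V ∈ powersetCard (a + 1 + 1) (univ : Finset N), f V) := by
      rw [ins_sum a (fun V => ∑ y ∈ univ \ V, f (insert y V))]
      rw [ins_sum (a + 1) (fun V => f V)]
      push_cast; ring
    rw [e3]
    push_cast
    ring_nf
  rw [key] at hT
  linarith


end AuxRA

section AuxRB

private lemma chord (gb : ℕ → ℝ) (n : ℕ)
    (hconc : ∀ a, a + 2 ≤ n → gb a + gb (a + 2) ≤ 2 * gb (a + 1))
    (hend : 0 ≤ gb n) (m : ℕ) (hm1 : 1 ≤ m) (hmn : m ≤ n) :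
    ((n - m : ℕ) : ℝ) * gb 1 ≤ ((n - 1 : ℕ) : ℝ) * gb m := by
  set d : ℕ → ℝ := fun j => gb j - gb (j + 1) with hd
  have step : ∀ j, j + 2 ≤ n → d j ≤ d (j + 1) := by
    intro j hj
    have := hconc j hj
    simp only [hd]
    linarith
  have mono : ∀ j, j + 1 ≤ n → ∀ i, i ≤ j → d i ≤ d j := by
    intro j
    induction j with
    | zero => intro _ i hi; have : i = 0 := Nat.le_zero.mp hi; subst this; exact le_refl _
    | succ j ih =>
      intro hj i hi
      rcases Nat.lt_succ_iff_lt_or_eq.mp (Nat.lt_succ_of_le hi) with h | h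
      · exact le_trans (ih (by omega) i (by omega)) (step j (by omega))
      · subst h; exact le_refl _
  have t1 : gb 1 - gb m = ∑ j ∈ Finset.Ico 1 m, d j := (telescope_aux gb 1 m hm1).symm
  have t2 : gb m - gb n = ∑ j ∈ Finset.Ico m n, d j := (telescope_aux gb m n hmn).symm
  have b1 : gb 1 - gb m ≤ ((m - 1 : ℕ) : ℝ) * d (m - 1) := by
    have h := Finset.sum_le_card_nsmul (Finset.Ico 1 m) d (d (m - 1)) (fun j hj => by
      rw [Finset.mem_Ico] at hj
      exact mono (m - 1) (by omega) j (by omega))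
    rwa [Nat.card_Ico, nsmul_eq_mul, ← t1] at h
  have b2 : ((n - m : ℕ) : ℝ) * d (m - 1) ≤ gb m - gb n := by
    have h := Finset.card_nsmul_le_sum (Finset.Ico m n) d (d (m - 1)) (fun j hj => by
      rw [Finset.mem_Ico] at hj
      exact mono j (by omega) (m - 1) (by omega))
    rwa [Nat.card_Ico, nsmul_eq_mul, ← t2] at h
  have hcast : ((n - m : ℕ) : ℝ) + ((m - 1 : ℕ) : ℝ) = ((n - 1 : ℕ) : ℝ) := by
    have : (n - m : ℕ) + (m - 1 : ℕ) = n - 1 := by omega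
    exact_mod_cast congrArg (Nat.cast : ℕ → ℝ) this
  have hc : (0 : ℝ) ≤ ((n - m : ℕ) : ℝ) := Nat.cast_nonneg _
  have he : (0 : ℝ) ≤ ((m - 1 : ℕ) : ℝ) := Nat.cast_nonneg _
  have p1 := mul_le_mul_of_nonneg_left b1 hc
  have p2 := mul_le_mul_of_nonneg_left b2 he
  have p3 : 0 ≤ ((m - 1 : ℕ) : ℝ) * gb n := mul_nonneg he hend
  have p4 : (((n - m : ℕ) : ℝ) + ((m - 1 : ℕ) : ℝ)) * gb m = ((n - 1 : ℕ) : ℝ) * gb m := by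
    rw [hcast]
  nlinarith [p1, p2, p3, p4]

private lemma nat_id (k : ℕ) (hk : 1 ≤ k) :
    ∑ m ∈ Finset.range (k + 1), k.choose m * (k - m) * (k - 1) ^ (k - m)
      = k * (k - 1) * k ^ (k - 1) := by
  have h1 : ∑ m ∈ Finset.range (k + 1), k.choose m * (k - m) * (k - 1) ^ (k - m)
      = ∑ j ∈ Finset.range (k + 1), k.choose j * j * (k - 1) ^ j := by
    rw [← Finset.sum_range_reflect]
    refine Finset.sum_congr rfl fun j hj => ?_
    rw [Finset.mem_range] at hj
    have hjk : j ≤ k := by omega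
    rw [show k + 1 - 1 - j = k - j from by omega, Nat.choose_symm hjk,
      Nat.sub_sub_self hjk]
  rw [h1, Finset.sum_range_succ']
  simp only [Nat.mul_zero, Nat.zero_mul, pow_zero, Nat.mul_one, Nat.add_zero]
  have h2 : ∀ j, k.choose (j + 1) * (j + 1) = k * (k - 1).choose j := by
    intro j
    have := Nat.add_one_mul_choose_eq (k - 1) j
    simp only [Nat.succ_eq_add_one, show k - 1 + 1 = k from by omega] at this
    exact this.symm
  have h3 : ∀ j, k.choose (j + 1) * (j + 1) * (k - 1) ^ (j + 1)
      = k * (k - 1) * ((k - 1).choose j * (k - 1) ^ j) := by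
    intro j
    rw [h2 j, pow_succ]
    ring
  rw [Finset.sum_congr rfl fun j _ => h3 j, ← Finset.mul_sum]
  congr 1
  have hb := add_pow (k - 1) 1 (k - 1)
  simp only [one_pow, mul_one, Nat.cast_id, show k - 1 + 1 = k from by omega] at hb
  rw [hb]
  exact Finset.sum_congr rfl fun i _ => mul_comm _ _

end AuxRB

section AuxRC
set_option linter.unusedSectionVars false
set_option linter.unusedVariables false
variable {N : Type*} [Fintype N] [DecidableEq N]

private lemma count_fiber (k : ℕ) (hk : 1 ≤ k) (hcard : Fintype.card N = k)
    (i : Fin k) (S : Finset N) :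
    ((univ : Finset (N → Fin k)).filter
        (fun g => univ.filter (fun u => g u = i) = S)).card
      = (k - 1) ^ (k - S.card) := by
  have hset : (univ : Finset (N → Fin k)).filter
        (fun g => univ.filter (fun u => g u = i) = S)
      = Fintype.piFinset
          (fun u => if u ∈ S then ({i} : Finset (Fin k)) else Finset.univ.erase i) := by
    ext g
    simp only [Finset.mem_filter, Finset.mem_univ, true_and, Fintype.mem_piFinset]
    constructor
    · intro h u
      have hu := Finset.ext_iff.mp h u
      simp only [Finset.mem_filter, Finset.mem_univ, true_and] at hu
      by_cases hS : u ∈ S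
      · simp [hS, hu.mpr hS]
      · simp only [hS, if_false, Finset.mem_erase, Finset.mem_univ, and_true]
        exact fun h' => hS (hu.mp h')
    · intro h
      ext u
      simp only [Finset.mem_filter, Finset.mem_univ, true_and]
      have hu := h u
      by_cases hS : u ∈ S
      · simp only [hS, if_true, Finset.mem_singleton] at hu
        simp [hS, hu]
      · simp only [hS, if_false, Finset.mem_erase] at hu
        simp [hS, hu.1]
  rw [hset, Fintype.card_piFinset]
  have hcards : ∀ u : N, (if u ∈ S then ({i} : Finset (Fin k)) else Finset.univ.erase i).card
      = if u ∈ S then 1 else k - 1 := by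
    intro u
    by_cases hS : u ∈ S <;>
      simp [hS, Finset.card_erase_of_mem (Finset.mem_univ i), Finset.card_univ]
  rw [Finset.prod_congr rfl fun u _ => hcards u, Finset.prod_ite, Finset.prod_const,
    Finset.prod_const, one_pow, one_mul]
  congr 1
  have h1 : (univ.filter (fun u => u ∈ S)) = S := by
    rw [Finset.filter_mem_eq_inter, Finset.univ_inter]
  have h2 := Finset.card_filter_add_card_filter_not
    (s := (univ : Finset N)) (p := fun u => u ∈ S)
  rw [h1, Finset.card_univ, hcard] at h2
  omega

private lemma player_sum (k : ℕ) (hk : 1 ≤ k) (hcard : Fintype.card N = k)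
    (f : Finset N → ℝ) (i : Fin k) :
    ∑ g : N → Fin k, f (univ.filter (fun u => g u = i))
      = ∑ m ∈ Finset.range (k + 1),
          (((k - 1) ^ (k - m) : ℕ) : ℝ) * ∑ S ∈ powersetCard m (univ : Finset N), f S := by
  have h0 : ∑ g : N → Fin k, f (univ.filter (fun u => g u = i))
      = ∑ S ∈ (univ : Finset N).powerset,
          ∑ g ∈ (univ : Finset (N → Fin k)).filter
            (fun g => univ.filter (fun u => g u = i) = S),
            f (univ.filter (fun u => g u = i)) := by
    rw [Finset.sum_fiberwise_of_maps_to]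
    intro g _
    exact Finset.mem_powerset.mpr (Finset.filter_subset _ _)
  rw [h0]
  have h1 : ∀ S ∈ (univ : Finset N).powerset,
      ∑ g ∈ (univ : Finset (N → Fin k)).filter
          (fun g => univ.filter (fun u => g u = i) = S),
        f (univ.filter (fun u => g u = i))
      = (((k - 1) ^ (k - S.card) : ℕ) : ℝ) * f S := by
    intro S _
    rw [Finset.sum_congr rfl (fun g hg => by
      rw [(Finset.mem_filter.mp hg).2]), Finset.sum_const,
      count_fiber k hk hcard i S, nsmul_eq_mul]
  rw [Finset.sum_congr rfl h1]
  have h2 : (univ : Finset N).powerset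
      = (Finset.range ((univ : Finset N).card + 1)).disjiUnion
          (fun m => powersetCard m (univ : Finset N))
          (fun i _ j _ hij => (univ : Finset N).pairwise_disjoint_powersetCard hij) :=
    Finset.powerset_card_disjiUnion _
  rw [h2]
  refine (Finset.sum_disjiUnion _ _ _).trans ?_
  rw [Finset.card_univ, hcard]
  refine Finset.sum_congr rfl fun m _ => ?_
  rw [Finset.mul_sum]
  refine Finset.sum_congr rfl fun S hS => ?_
  rw [(Finset.mem_powersetCard.mp hS).2]

private lemma single_bound (f : Finset N → ℝ)
    (hsub : ∀ A B : Finset N, f A + f B ≥ f (A ∪ B) + f (A ∩ B)) :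
    ∀ O : Finset N, f O ≤ (∑ u ∈ O, f {u}) + (1 - (O.card : ℝ)) * f ∅ := by
  intro O
  induction O using Finset.induction_on with
  | empty => simp
  | @insert a O haO ih =>
    have h1 := hsub {a} O
    rw [← Finset.insert_eq, Finset.singleton_inter_of_notMem haO] at h1
    rw [Finset.sum_insert haO, Finset.card_insert_of_notMem haO]
    push_cast
    linarith

private lemma opt_bound (k : ℕ) (hcard : Fintype.card N = k)
    (f : Finset N → ℝ) (hnonneg : ∀ S : Finset N, 0 ≤ f S)
    (hsub : ∀ A B : Finset N, f A + f B ≥ f (A ∪ B) + f (A ∩ B))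
    (OPT : Fin k → Finset N)
    (hdisj : ∀ i j : Fin k, i ≠ j → Disjoint (OPT i) (OPT j))
    (hcover : Finset.univ.biUnion OPT = Finset.univ) :
    ∑ i : Fin k, f (OPT i) ≤ ∑ S ∈ powersetCard 1 (univ : Finset N), f S := by
  have hdisj' : ∀ i ∈ (univ : Finset (Fin k)), ∀ j ∈ (univ : Finset (Fin k)),
      i ≠ j → Disjoint (OPT i) (OPT j) := fun i _ j _ hij => hdisj i j hij
  have hsum : ∑ i : Fin k, ∑ u ∈ OPT i, f {u} = ∑ u : N, f {u} := by
    rw [← Finset.sum_biUnion hdisj', hcover]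
  have hcardsum : ∑ i : Fin k, (OPT i).card = k := by
    rw [← Finset.card_biUnion hdisj', hcover, Finset.card_univ, hcard]
  have hone : ∑ S ∈ powersetCard 1 (univ : Finset N), f S = ∑ u : N, f {u} := by
    rw [Finset.powersetCard_one, Finset.sum_map]
    rfl
  rw [hone]
  calc ∑ i : Fin k, f (OPT i)
      ≤ ∑ i : Fin k, ((∑ u ∈ OPT i, f {u}) + (1 - ((OPT i).card : ℝ)) * f ∅) :=
        Finset.sum_le_sum fun i _ => single_bound f hsub (OPT i)
    _ = ∑ u : N, f {u} + (∑ i : Fin k, (1 - ((OPT i).card : ℝ))) * f ∅ := by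
        rw [Finset.sum_add_distrib, hsum, Finset.sum_mul]
    _ = ∑ u : N, f {u} := by
        have : ∑ i : Fin k, (1 - ((OPT i).card : ℝ)) = 0 := by
          rw [Finset.sum_sub_distrib]
          simp only [Finset.sum_const, Finset.card_univ, Fintype.card_fin, nsmul_eq_mul,
            mul_one]
          rw [← Nat.cast_sum]
          rw [hcardsum]
          simp
        rw [this, zero_mul, add_zero]


end AuxRC

private lemma fac_id (K X : ℝ) (e : ℕ) (hK : 0 < K) (hX : 0 < X) :
    1 - (X / K) ^ e = (K * X * K ^ e - K * (X ^ e * X)) / (K ^ e * K * X) := by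
  have h1 : K ^ e ≠ 0 := by positivity
  rw [div_pow, eq_div_iff (by positivity)]
  field_simp

/-- random assignment for Submodular Welfare with `k` identical
non-negative submodular utilities on a ground set of `k` items. Assigning each element
independently and uniformly at random to one of the `k` players (an assignment is a
function `g : N → Fin k`, each occurring with probability `(1/k)^n`, and player `i`
receives `S_i = g⁻¹(i)`) yields expected welfare at least
`[1 − (1 − 1/k)^{k−1}]` times the welfare of any fixed partition `OPT_1, …, OPT_k`. -/
theorem random_assignment_welfare {N : Type*} [Fintype N] [DecidableEq N]
    (k : ℕ) (hk : 1 ≤ k) (hcard : Fintype.card N = k)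
    (f : Finset N → ℝ)
    (hnonneg : ∀ S : Finset N, 0 ≤ f S)
    (hsub : ∀ A B : Finset N, f A + f B ≥ f (A ∪ B) + f (A ∩ B))
    (OPT : Fin k → Finset N)
    (hdisj : ∀ i j : Fin k, i ≠ j → Disjoint (OPT i) (OPT j))
    (hcover : Finset.univ.biUnion OPT = Finset.univ) :
    ∑ g : N → Fin k,
        (1 / (k : ℝ)) ^ Fintype.card N *
          ∑ i : Fin k, f (Finset.univ.filter (fun u => g u = i)) ≥
      (1 - (1 - 1 / (k : ℝ)) ^ (k - 1)) * ∑ i : Fin k, f (OPT i) := by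
  -- abbreviations
  set G : ℕ → ℝ := fun m => ∑ S ∈ powersetCard m (univ : Finset N), f S with hGdef
  have hGnonneg : ∀ m, 0 ≤ G m := fun m =>
    Finset.sum_nonneg fun S _ => hnonneg S
  -- Step 1 : rewrite the LHS
  have hLHS : ∑ g : N → Fin k,
      (1 / (k : ℝ)) ^ Fintype.card N *
        ∑ i : Fin k, f (Finset.univ.filter (fun u => g u = i))
      = (1 / (k : ℝ)) ^ k *
          ((k : ℝ) * ∑ m ∈ Finset.range (k + 1),
            (((k - 1) ^ (k - m) : ℕ) : ℝ) * G m) := by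
    rw [hcard, ← Finset.mul_sum]
    congr 1
    rw [Finset.sum_comm]
    have : ∀ i : Fin k, ∑ g : N → Fin k, f (univ.filter (fun u => g u = i))
        = ∑ m ∈ Finset.range (k + 1), (((k - 1) ^ (k - m) : ℕ) : ℝ) * G m :=
      fun i => player_sum k hk hcard f i
    rw [Finset.sum_congr rfl fun i _ => this i, Finset.sum_const, Finset.card_univ,
      Fintype.card_fin, nsmul_eq_mul]
  rw [hLHS, ge_iff_le]
  -- the case k = 1
  rcases eq_or_lt_of_le hk with hk1 | hk2
  · have : (1 : ℝ) - (1 - 1 / (k : ℝ)) ^ (k - 1) = 0 := by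
      rw [← hk1]; norm_num
    rw [this, zero_mul]
    have h1 : (0:ℝ) ≤ (k : ℝ) * ∑ m ∈ Finset.range (k + 1),
        (((k - 1) ^ (k - m) : ℕ) : ℝ) * G m := by
      refine mul_nonneg (by positivity) (Finset.sum_nonneg fun m _ => ?_)
      exact mul_nonneg (Nat.cast_nonneg _) (hGnonneg m)
    positivity
  -- now 2 ≤ k
  have hk2' : 2 ≤ k := hk2
  have hkR : (0:ℝ) < (k : ℝ) := by positivity
  have hkm1R : (0:ℝ) < ((k - 1 : ℕ) : ℝ) := by
    have : 1 ≤ k - 1 := by omega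
    exact_mod_cast Nat.lt_of_lt_of_le Nat.zero_lt_one this
  -- normalized averages
  set gb : ℕ → ℝ := fun m => G m / ((k.choose m : ℕ) : ℝ) with hgbdef
  have hchoosepos : ∀ m, m ≤ k → (0:ℝ) < ((k.choose m : ℕ) : ℝ) := by
    intro m hm
    exact_mod_cast Nat.choose_pos hm
  have hG : ∀ m, m ≤ k → G m = ((k.choose m : ℕ) : ℝ) * gb m := by
    intro m hm
    rw [hgbdef]
    field_simp [(hchoosepos m hm).ne']
  have hgbnonneg : ∀ m, 0 ≤ gb m := fun m =>
    div_nonneg (hGnonneg m) (Nat.cast_nonneg _)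
  -- concavity of gb
  have hconc : ∀ a, a + 2 ≤ k → gb a + gb (a + 2) ≤ 2 * gb (a + 1) := by
    intro a ha
    set b : ℕ := k - a - 2 with hbdef
    have hab : a + b + 2 = Fintype.card N := by rw [hcard]; omega
    have hC := concave_G f hsub a b hab
    rw [show (∑ S ∈ powersetCard (a+2) (univ : Finset N), f S) = G (a+2) from rfl,
      show (∑ S ∈ powersetCard a (univ : Finset N), f S) = G a from rfl,
      show (∑ S ∈ powersetCard (a+1) (univ : Finset N), f S) = G (a+1) from rfl,
      hG (a+2) (by omega), hG a (by omega), hG (a+1) (by omega)] at hC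
    have e1 : k.choose (a+2) * (a+2) = k.choose (a+1) * (b+1) := by
      have := Nat.choose_succ_right_eq k (a+1)
      rwa [show k - (a+1) = b + 1 from by omega] at this
    have e2 : k.choose (a+1) * (a+1) = k.choose a * (b+2) := by
      have := Nat.choose_succ_right_eq k a
      rwa [show k - a = b + 2 from by omega] at this
    have id1 : (a+1) * (a+2) * k.choose (a+2) = (a+1) * (b+1) * k.choose (a+1) :=
      calc (a+1) * (a+2) * k.choose (a+2) = (a+1) * (k.choose (a+2) * (a+2)) := by ring
        _ = (a+1) * (k.choose (a+1) * (b+1)) := by rw [e1]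
        _ = (a+1) * (b+1) * k.choose (a+1) := by ring
    have id2 : (b+2) * (b+1) * k.choose a = (a+1) * (b+1) * k.choose (a+1) :=
      calc (b+2) * (b+1) * k.choose a = (b+1) * (k.choose a * (b+2)) := by ring
        _ = (b+1) * (k.choose (a+1) * (a+1)) := by rw [← e2]
        _ = (a+1) * (b+1) * k.choose (a+1) := by ring
    set c : ℝ := ((a : ℝ) + 1) * ((b : ℝ) + 1) * ((k.choose (a+1) : ℕ) : ℝ) with hcdef
    have hcpos : 0 < c := by
      have := hchoosepos (a+1) (by omega)
      positivity
    have id1R : ((a : ℝ) + 1) * ((a : ℝ) + 2) * ((k.choose (a+2) : ℕ) : ℝ) = c := by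
      rw [hcdef]
      exact_mod_cast congrArg (Nat.cast (R := ℝ)) id1
    have id2R : ((b : ℝ) + 2) * ((b : ℝ) + 1) * ((k.choose a : ℕ) : ℝ) = c := by
      rw [hcdef]
      exact_mod_cast congrArg (Nat.cast (R := ℝ)) id2
    have hX : ((a : ℝ) + 1) * ((a : ℝ) + 2) * (((k.choose (a+2) : ℕ) : ℝ) * gb (a+2))
        = c * gb (a+2) := by rw [← mul_assoc, id1R]
    have hY : ((b : ℝ) + 2) * ((b : ℝ) + 1) * (((k.choose a : ℕ) : ℝ) * gb a)
        = c * gb a := by rw [← mul_assoc, id2R]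
    have hZ : 2 * (((a : ℝ) + 1) * ((b : ℝ) + 1))
        * (((k.choose (a+1) : ℕ) : ℝ) * gb (a+1)) = 2 * (c * gb (a+1)) := by
      rw [hcdef]; ring
    rw [hX, hY, hZ] at hC
    have : c * (gb a + gb (a + 2)) ≤ c * (2 * gb (a + 1)) := by linarith
    exact le_of_mul_le_mul_left this hcpos
  -- chord bound, multiplied form
  have hchordG : ∀ m, 1 ≤ m → m ≤ k →
      (((k - m : ℕ) : ℝ) * ((k.choose m : ℕ) : ℝ)) * G 1
        ≤ (((k - 1 : ℕ) : ℝ) * (k : ℝ)) * G m := by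
    intro m hm1 hmk
    have hch := chord gb k hconc (hgbnonneg k) m hm1 hmk
    have hpos : (0:ℝ) ≤ (k : ℝ) * ((k.choose m : ℕ) : ℝ) :=
      mul_nonneg (le_of_lt hkR) (Nat.cast_nonneg _)
    have hmul := mul_le_mul_of_nonneg_left hch hpos
    have hG1 : G 1 = (k : ℝ) * gb 1 := by
      have := hG 1 (by omega)
      rwa [Nat.choose_one_right] at this
    rw [hG1, hG m hmk]
    nlinarith [hmul]
  -- sum over m ∈ Ico 1 (k+1)
  have hIcoNat : (∑ m ∈ Finset.Ico 1 (k + 1),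
      k.choose m * (k - m) * (k - 1) ^ (k - m)) + k * (k - 1) ^ k
      = k * (k - 1) * k ^ (k - 1) := by
    have hni := nat_id k hk
    rw [Finset.range_eq_Ico, Finset.sum_eq_sum_Ico_succ_bot (by omega : 0 < k + 1)] at hni
    simp only [Nat.choose_zero_right, Nat.sub_zero, one_mul, Nat.zero_add, zero_add] at hni
    omega
  set SIco : ℝ := ∑ m ∈ Finset.Ico 1 (k + 1), (((k - 1) ^ (k - m) : ℕ) : ℝ) * G m
    with hSIdef
  have hSIco : (((k * (k-1) * k ^ (k-1) : ℕ) : ℝ) - ((k * (k - 1) ^ k : ℕ) : ℝ)) * G 1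
      ≤ (((k - 1 : ℕ) : ℝ) * (k : ℝ)) * SIco := by
    have hterm : ∀ m ∈ Finset.Ico 1 (k + 1),
        ((k.choose m * (k - m) * (k - 1) ^ (k - m) : ℕ) : ℝ) * G 1
          ≤ (((k - 1) ^ (k - m) : ℕ) : ℝ) * ((((k - 1 : ℕ) : ℝ) * (k : ℝ)) * G m) := by
      intro m hm
      rw [Finset.mem_Ico] at hm
      have h := hchordG m hm.1 (by omega)
      have hp : (0:ℝ) ≤ (((k - 1) ^ (k - m) : ℕ) : ℝ) := Nat.cast_nonneg _
      have := mul_le_mul_of_nonneg_left h hp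
      push_cast at this ⊢
      nlinarith [this]
    have hsumle := Finset.sum_le_sum hterm
    rw [← Finset.sum_mul, ← Nat.cast_sum] at hsumle
    calc (((k * (k-1) * k ^ (k-1) : ℕ) : ℝ) - ((k * (k - 1) ^ k : ℕ) : ℝ)) * G 1
        = ((∑ m ∈ Finset.Ico 1 (k + 1),
            k.choose m * (k - m) * (k - 1) ^ (k - m) : ℕ) : ℝ) * G 1 := by
          rw [show ((∑ m ∈ Finset.Ico 1 (k + 1),
            k.choose m * (k - m) * (k - 1) ^ (k - m) : ℕ) : ℝ)
            = (((k * (k-1) * k ^ (k-1) : ℕ) : ℝ) - ((k * (k - 1) ^ k : ℕ) : ℝ)) from by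
              have := congrArg (Nat.cast (R := ℝ)) hIcoNat
              push_cast at this ⊢
              linarith]
      _ ≤ ∑ m ∈ Finset.Ico 1 (k + 1),
            (((k - 1) ^ (k - m) : ℕ) : ℝ) * ((((k - 1 : ℕ) : ℝ) * (k : ℝ)) * G m) :=
          hsumle
      _ = (((k - 1 : ℕ) : ℝ) * (k : ℝ)) * SIco := by
          rw [hSIdef, Finset.mul_sum]
          refine Finset.sum_congr rfl fun m _ => by ring
  -- full sum vs Ico sum
  have hfull : SIco ≤ ∑ m ∈ Finset.range (k + 1), (((k - 1) ^ (k - m) : ℕ) : ℝ) * G m := by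
    rw [Finset.range_eq_Ico, Finset.sum_eq_sum_Ico_succ_bot (by omega : 0 < k + 1)]
    have : 0 ≤ (((k - 1) ^ (k - 0) : ℕ) : ℝ) * G 0 :=
      mul_nonneg (Nat.cast_nonneg _) (hGnonneg 0)
    rw [hSIdef]
    linarith
  -- OPT bound
  have hOPT : ∑ i : Fin k, f (OPT i) ≤ G 1 :=
    opt_bound k hcard f hnonneg hsub OPT hdisj hcover
  -- the factor identity
  set NcR : ℝ := ((k * (k-1) * k ^ (k-1) : ℕ) : ℝ) - ((k * (k - 1) ^ k : ℕ) : ℝ) with hNcRdef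
  have hNcRnonneg : 0 ≤ NcR := by
    rw [hNcRdef]
    have hle : k * (k - 1) ^ k ≤ k * (k-1) * k ^ (k-1) := by
      have h1 : (k - 1) ^ k = (k-1) * (k - 1) ^ (k - 1) := by
        rw [← pow_succ']
        congr 1
        omega
      have h2 : (k - 1) ^ (k - 1) ≤ k ^ (k - 1) :=
        Nat.pow_le_pow_left (by omega) _
      calc k * (k - 1) ^ k = k * (k-1) * (k - 1) ^ (k - 1) := by rw [h1]; ring
        _ ≤ k * (k-1) * k ^ (k - 1) := Nat.mul_le_mul_left _ h2
    have := (Nat.cast_le (α := ℝ)).mpr hle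
    linarith
  set D : ℝ := (k : ℝ) ^ k * ((k - 1 : ℕ) : ℝ) with hDdef
  have hDpos : 0 < D := by
    rw [hDdef]; positivity
  have hfac : 1 - (1 - 1 / (k : ℝ)) ^ (k - 1) = NcR / D := by
    have hXne : ((k - 1 : ℕ) : ℝ) ≠ 0 := ne_of_gt hkm1R
    have hKne : (k : ℝ) ≠ 0 := ne_of_gt hkR
    have p1 : (k : ℝ) ^ k = (k : ℝ) ^ (k - 1) * (k : ℝ) := by
      rw [← pow_succ]
      congr 1
      omega
    have p2 : ((k - 1 : ℕ) : ℝ) ^ k = ((k - 1 : ℕ) : ℝ) ^ (k - 1) * ((k - 1 : ℕ) : ℝ) := by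
      rw [← pow_succ]
      congr 1
      omega
    have hNcR' : NcR = (k : ℝ) * ((k - 1 : ℕ) : ℝ) * (k : ℝ) ^ (k - 1)
        - (k : ℝ) * (((k - 1 : ℕ) : ℝ) ^ (k - 1) * ((k - 1 : ℕ) : ℝ)) := by
      rw [hNcRdef, ← p2]
      push_cast [Nat.cast_sub hk]
      ring
    have h1k : (1 : ℝ) - 1 / (k : ℝ) = ((k - 1 : ℕ) : ℝ) / (k : ℝ) := by
      rw [Nat.cast_sub hk]
      push_cast
      field_simp
    rw [h1k, hNcR', hDdef, p1]
    exact fac_id (k : ℝ) ((k - 1 : ℕ) : ℝ) (k - 1) hkR hkm1R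
  rw [hfac]
  -- final chain
  have key : NcR * (∑ i : Fin k, f (OPT i)) ≤ D * ((1 / (k : ℝ)) ^ k *
      ((k : ℝ) * ∑ m ∈ Finset.range (k + 1), (((k - 1) ^ (k - m) : ℕ) : ℝ) * G m)) := by
    have h1 : NcR * (∑ i : Fin k, f (OPT i)) ≤ NcR * G 1 :=
      mul_le_mul_of_nonneg_left hOPT hNcRnonneg
    have h2 : (((k - 1 : ℕ) : ℝ) * (k : ℝ)) * SIco ≤ (((k - 1 : ℕ) : ℝ) * (k : ℝ)) *
        (∑ m ∈ Finset.range (k + 1), (((k - 1) ^ (k - m) : ℕ) : ℝ) * G m) :=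
      mul_le_mul_of_nonneg_left hfull (mul_nonneg (le_of_lt hkm1R) (le_of_lt hkR))
    have h3 : D * ((1 / (k : ℝ)) ^ k *
        ((k : ℝ) * ∑ m ∈ Finset.range (k + 1), (((k - 1) ^ (k - m) : ℕ) : ℝ) * G m))
        = (((k - 1 : ℕ) : ℝ) * (k : ℝ)) *
          (∑ m ∈ Finset.range (k + 1), (((k - 1) ^ (k - m) : ℕ) : ℝ) * G m) := by
      rw [hDdef]
      have : ((1 : ℝ) / (k : ℝ)) ^ k = 1 / (k : ℝ) ^ k := by
        rw [div_pow, one_pow]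
      rw [this]
      field_simp
    rw [h3]
    linarith
  calc NcR / D * ∑ i : Fin k, f (OPT i) = (NcR * ∑ i : Fin k, f (OPT i)) / D := by ring
    _ ≤ (D * ((1 / (k : ℝ)) ^ k *
          ((k : ℝ) * ∑ m ∈ Finset.range (k + 1), (((k - 1) ^ (k - m) : ℕ) : ℝ) * G m))) / D :=
        by gcongr
    _ = (1 / (k : ℝ)) ^ k *
          ((k : ℝ) * ∑ m ∈ Finset.range (k + 1), (((k - 1) ^ (k - m) : ℕ) : ℝ) * G m) :=
        mul_div_cancel_left₀ _ (ne_of_gt hDpos)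
end

section
/- Let g, h : {0, δ, 2δ, …} → ℝ be defined for a step size δ ∈ (0, 1/2] and a constant V ≥ 0 by g(0) = 0 and g(t + δ) = g(t) + δ·(V − 2·g(t)), and h(t) = (1/2)·(1 − e^{−2t})·V. Then g(t) ≥ h(t) for every t in {0, δ, 2δ, …}. -/
/-- let `δ ∈ (0, 1/2]` and `V ≥ 0`. If `g` satisfies `g(0) = 0` and
`g(t + δ) = g(t) + δ·(V − 2·g(t))` on the grid `{0, δ, 2δ, …}` (indexed by the number of
steps `m`, so `t = m·δ`), and `h(t) = (1/2)·(1 − e^{−2t})·V`, then `g(t) ≥ h(t)` at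
every grid point. -/
theorem discrete_lower_bound (δ V : ℝ) (hδ0 : 0 < δ) (hδ : δ ≤ 1 / 2) (hV : 0 ≤ V)
    (g : ℕ → ℝ) (hg0 : g 0 = 0)
    (hgrec : ∀ m : ℕ, g (m + 1) = g m + δ * (V - 2 * g m)) :
    ∀ m : ℕ, g m ≥ (1 / 2) * (1 - Real.exp (-2 * ((m : ℝ) * δ))) * V := by
  intro m
  induction m with
  | zero => simp [hg0]
  | succ n ih =>
    rw [hgrec n]
    have hc : (0:ℝ) ≤ 1 - 2 * δ := by linarith
    have h1 : Real.exp (-2 * δ) ≥ 1 - 2 * δ := by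
      have := Real.add_one_le_exp (-2 * δ); linarith
    have h2 : Real.exp (-2 * ((n:ℝ) * δ)) ≤ 1 := by
      apply Real.exp_le_one_iff.mpr; nlinarith [Nat.cast_nonneg (α := ℝ) n]
    have h3 : 0 < Real.exp (-2 * ((n:ℝ) * δ)) := Real.exp_pos _
    have hexp : Real.exp (-2 * (((n:ℕ) + 1 : ℝ) * δ))
        = Real.exp (-2 * ((n:ℝ) * δ)) * Real.exp (-2 * δ) := by
      rw [← Real.exp_add]; ring_nf
    push_cast
    rw [hexp]
    nlinarith [mul_le_mul_of_nonneg_left ih hc, mul_le_mul_of_nonneg_right h2 hV,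
      mul_le_mul_of_nonneg_left h1 (mul_nonneg h3.le hV)]
end
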